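/- arXiv:1405.2190 — 7 statements merged into one kernel-verified Lean document; each statement's English description precedes it below -/
import Mathlib

section
/- Suppose there exist measurable functions λ_i : [0,T] → ℝ with 0 ≤ λ_i(t) ≤ 1 a.e. in [0,T] for i = 1,…,p and a constant σ > 0 such that min_{j=1,…,q} Σ_{i=1}^p λ_i(t) B_{ij}(t) ≥ σ a.e. in [0,T]. Then every feasible solution z of (CLP_ε) satisfies Σ_{j=1}^q |z_j(t)| ≤ (p(ζ+ε)/σ) · exp(p φ t / σ) a.e. in [0,T], where ζ = max_i ‖c_i‖_∞ and φ = max_i Σ_j ‖K_{ij}‖_∞. -/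
open MeasureTheory Set

/-- Proposition 3.1: uniform essential boundedness of the feasible set of (CLP_ε). -/
theorem clp_eps_feasible_bound (T : ℝ) (hT : 0 < T) (p q : ℕ)
    (c : ℝ → Fin p → ℝ) (B : ℝ → Fin p → Fin q → ℝ)
    (K : ℝ → ℝ → Fin p → Fin q → ℝ)
    (ε σ ζ φ : ℝ) (hε : 0 ≤ ε) (hσ : 0 < σ)
    (lam : Fin p → ℝ → ℝ)
    (hlam : ∀ i, ∀ᵐ t ∂(volume.restrict (Icc 0 T)), 0 ≤ lam i t ∧ lam i t ≤ 1)
    (hmin : ∀ j, ∀ᵐ t ∂(volume.restrict (Icc 0 T)), σ ≤ ∑ i, lam i t * B t i j)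
    (hζ : ∀ i, ∀ᵐ t ∂(volume.restrict (Icc 0 T)), |c t i| ≤ ζ)
    (hφ : ∀ i, ∀ᵐ x ∂((volume.restrict (Icc 0 T)).prod (volume.restrict (Icc 0 T))),
      ∑ j, |K x.1 x.2 i j| ≤ φ)
    (hK : ∀ i j, MemLp (fun x : ℝ × ℝ => K x.1 x.2 i j) ⊤
      ((volume.restrict (Icc 0 T)).prod (volume.restrict (Icc 0 T))))
    (z : ℝ → Fin q → ℝ)
    (hz : ∀ j, MemLp (fun t => z t j) ⊤ (volume.restrict (Icc 0 T)))
    (hznn : ∀ᵐ t ∂(volume.restrict (Icc 0 T)), ∀ j, 0 ≤ z t j)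
    (hzfeas : ∀ᵐ t ∂(volume.restrict (Icc 0 T)), ∀ i,
      ∑ j, B t i j * z t j ≤ c t i + ε + ∫ s in Icc 0 t, ∑ j, K t s i j * z s j) :
    ∀ᵐ t ∂(volume.restrict (Icc 0 T)),
      ∑ j, |z t j| ≤ (p * (ζ + ε) / σ) * Real.exp (p * φ * t / σ) := by
  set μ := volume.restrict (Icc (0:ℝ) T) with hμdef
  haveI : IsFiniteMeasure μ := by
    constructor
    rw [hμdef, Measure.restrict_apply_univ]
    exact measure_Icc_lt_top
  have hμuniv : μ Set.univ ≠ 0 := by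
    rw [hμdef, Measure.restrict_apply_univ, Real.volume_Icc]
    simp only [ne_eq, ENNReal.ofReal_eq_zero, not_le]
    linarith
  have hμne : μ ≠ 0 := by
    intro h; rw [h] at hμuniv; simp at hμuniv
  haveI hne : (MeasureTheory.ae μ).NeBot := ae_neBot.mpr hμne
  by_cases hp : p = 0
  · subst hp
    rcases Nat.eq_zero_or_pos q with hq | hq
    · subst hq
      filter_upwards with t
      simp
    · exfalso
      obtain ⟨t, ht⟩ := (hmin ⟨0, hq⟩).exists
      simp only [Finset.univ_eq_empty, Finset.sum_empty] at ht
      linarith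
  have hp' : 0 < p := Nat.pos_of_ne_zero hp
  set i0 : Fin p := ⟨0, hp'⟩ with hi0
  have hζ0 : 0 ≤ ζ := by
    obtain ⟨t, ht⟩ := (hζ i0).exists
    exact le_trans (abs_nonneg _) ht
  have hprodne : μ.prod μ ≠ 0 := by
    intro h
    have : (μ.prod μ) Set.univ ≠ 0 := by
      rw [← Set.univ_prod_univ, Measure.prod_prod]
      exact mul_ne_zero hμuniv hμuniv
    rw [h] at this; simp at this
  haveI : (MeasureTheory.ae (μ.prod μ)).NeBot := ae_neBot.mpr hprodne
  have hφ0 : 0 ≤ φ := by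
    obtain ⟨x, hx⟩ := (hφ i0).exists
    exact le_trans (Finset.sum_nonneg fun j _ => abs_nonneg _) hx
  -- the total mass function
  set u : ℝ → ℝ := fun t => ∑ j, z t j with hudef
  have hu_mem : MemLp u ⊤ μ := by
    have := memLp_finset_sum (f := fun j (t : ℝ) => z t j) Finset.univ
      (fun j _ => hz j)
    simpa [hudef] using this
  have hu_int : Integrable u μ := hu_mem.integrable le_top
  have hu_nn : ∀ᵐ t ∂μ, 0 ≤ u t :=
    hznn.mono fun t h => Finset.sum_nonneg fun j _ => h j
  set w : ℝ → ℝ := Set.indicator (Icc 0 T) u with hwdef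
  have hw_int : Integrable w volume :=
    IntegrableOn.integrable_indicator hu_int measurableSet_Icc
  set F : ℝ → ℝ := fun t => ∫ s in (0:ℝ)..t, w s with hFdef
  have hFcont : Continuous F := hw_int.continuous_primitive 0
  have hw_nn : ∀ᵐ s ∂(volume : Measure ℝ), 0 ≤ w s := by
    have h := (ae_restrict_iff' measurableSet_Icc).mp hu_nn
    filter_upwards [h] with s hs
    by_cases hmem : s ∈ Icc (0:ℝ) T
    · rw [hwdef]; rw [Set.indicator_of_mem hmem]; exact hs hmem
    · rw [hwdef]; rw [Set.indicator_of_notMem hmem]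
  have hF_nn : ∀ t, 0 ≤ t → 0 ≤ F t := by
    intro t ht
    exact intervalIntegral.integral_nonneg_of_ae ht hw_nn
  -- set integral over Icc 0 t equals F t for t in [0,T]
  have hIcc_eq : ∀ t ∈ Icc (0:ℝ) T, (∫ s in Icc (0:ℝ) t, u s) = F t := by
    intro t ht
    have hsub : Icc (0:ℝ) t ⊆ Icc (0:ℝ) T := Icc_subset_Icc le_rfl ht.2
    have h1 : (∫ s in Icc (0:ℝ) t, u s) = ∫ s in Icc (0:ℝ) t, w s := by
      refine setIntegral_congr_fun measurableSet_Icc fun s hs => ?_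
      rw [hwdef, Set.indicator_of_mem (hsub hs)]
    rw [h1, integral_Icc_eq_integral_Ioc]
    exact (intervalIntegral.integral_of_le ht.1).symm
  -- step (6): bound the kernel integrals
  have h6 : ∀ i : Fin p, ∀ᵐ t ∂μ,
      (∫ s in Icc (0:ℝ) t, ∑ j, K t s i j * z s j) ≤ φ * ∫ s in Icc (0:ℝ) t, u s := by
    intro i
    have hmeas : ∀ᵐ t ∂μ, ∀ j, AEStronglyMeasurable (fun s => K t s i j) μ :=
      ae_all_iff.mpr fun j => (hK i j).aestronglyMeasurable.prodMk_left
    have hbd : ∀ᵐ t ∂μ, ∀ᵐ s ∂μ, ∑ j, |K t s i j| ≤ φ :=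
      Measure.ae_ae_of_ae_prod (hφ i)
    filter_upwards [hmeas, hbd, ae_restrict_mem measurableSet_Icc] with t hm hb ht
    have hsub : Icc (0:ℝ) t ⊆ Icc (0:ℝ) T := Icc_subset_Icc le_rfl ht.2
    have hres : volume.restrict (Icc (0:ℝ) t) ≤ μ := by
      rw [hμdef]; exact Measure.restrict_mono hsub le_rfl
    have hptw : ∀ᵐ s ∂(volume.restrict (Icc (0:ℝ) t)),
        ‖∑ j, K t s i j * z s j‖ ≤ φ * u s := by
      refine ae_restrict_of_ae_restrict_of_subset hsub ?_
      filter_upwards [hb, hznn] with s hKs hzs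
      have h1 : ∀ j, |K t s i j| ≤ φ := fun j =>
        le_trans (Finset.single_le_sum (f := fun j => |K t s i j|) (fun j _ => abs_nonneg _) (Finset.mem_univ j)) hKs
      calc ‖∑ j, K t s i j * z s j‖ ≤ ∑ j, ‖K t s i j * z s j‖ := norm_sum_le _ _
        _ = ∑ j, |K t s i j| * z s j := by
            refine Finset.sum_congr rfl fun j _ => ?_
            rw [Real.norm_eq_abs, abs_mul, abs_of_nonneg (hzs j)]
        _ ≤ ∑ j, φ * z s j := Finset.sum_le_sum fun j _ =>
            mul_le_mul_of_nonneg_right (h1 j) (hzs j)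
        _ = φ * u s := by rw [← Finset.mul_sum]
    have hint_u : Integrable u (volume.restrict (Icc (0:ℝ) t)) :=
      IntegrableOn.mono_set hu_int hsub
    have hint_phi_u : Integrable (fun s => φ * u s) (volume.restrict (Icc (0:ℝ) t)) :=
      hint_u.const_mul φ
    have hmeas_g : AEStronglyMeasurable (fun s => ∑ j, K t s i j * z s j)
        (volume.restrict (Icc (0:ℝ) t)) := by
      refine AEStronglyMeasurable.mono_measure ?_ hres
      exact Finset.aestronglyMeasurable_fun_sum Finset.univ fun j _ =>
        (hm j).mul (hz j).aestronglyMeasurable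
    have hint_g : Integrable (fun s => ∑ j, K t s i j * z s j)
        (volume.restrict (Icc (0:ℝ) t)) :=
      Integrable.mono' hint_phi_u hmeas_g hptw
    calc (∫ s in Icc (0:ℝ) t, ∑ j, K t s i j * z s j)
        ≤ ∫ s in Icc (0:ℝ) t, φ * u s :=
          integral_mono_ae hint_g hint_phi_u
            (hptw.mono fun s hs => le_trans (le_abs_self _) hs)
      _ = φ * ∫ s in Icc (0:ℝ) t, u s := integral_const_mul φ u
  set a0 : ℝ := (p : ℝ) * (ζ + ε) / σ with ha0def
  set b0 : ℝ := (p : ℝ) * φ / σ with hb0def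
  have ha0nn : 0 ≤ a0 := by
    rw [ha0def]
    exact div_nonneg (mul_nonneg (Nat.cast_nonneg p) (add_nonneg hζ0 hε)) hσ.le
  have hb0nn : 0 ≤ b0 := by
    rw [hb0def]
    exact div_nonneg (mul_nonneg (Nat.cast_nonneg p) hφ0) hσ.le
  -- the key Gronwall-type a.e. inequality
  have hkey : ∀ᵐ t ∂μ, u t ≤ a0 + b0 * F t := by
    filter_upwards [hzfeas, ae_all_iff.mpr hlam, ae_all_iff.mpr hmin, ae_all_iff.mpr hζ,
      ae_all_iff.mpr h6, hznn, ae_restrict_mem measurableSet_Icc] with t hfe hl hmn hc h6t hzt ht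
    have hS_F : (∫ s in Icc (0:ℝ) t, u s) = F t := hIcc_eq t ht
    have hSnn : 0 ≤ ∫ s in Icc (0:ℝ) t, u s := by rw [hS_F]; exact hF_nn t ht.1
    set S := ∫ s in Icc (0:ℝ) t, u s with hSdef
    have hR_nn : 0 ≤ ζ + ε + φ * S :=
      add_nonneg (add_nonneg hζ0 hε) (mul_nonneg hφ0 hSnn)
    have main : σ * u t ≤ (p : ℝ) * (ζ + ε) + (p : ℝ) * φ * S := by
      calc σ * u t = ∑ j, σ * z t j := by rw [hudef]; rw [Finset.mul_sum]
        _ ≤ ∑ j, (∑ i, lam i t * B t i j) * z t j :=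
            Finset.sum_le_sum fun j _ => mul_le_mul_of_nonneg_right (hmn j) (hzt j)
        _ = ∑ i, lam i t * ∑ j, B t i j * z t j := by
            simp_rw [Finset.sum_mul, Finset.mul_sum, ← mul_assoc]
            rw [Finset.sum_comm]
        _ ≤ ∑ _i : Fin p, (ζ + ε + φ * S) := by
            refine Finset.sum_le_sum fun i _ => ?_
            have h1 : ∑ j, B t i j * z t j ≤ ζ + ε + φ * S := by
              refine le_trans (hfe i) ?_
              have hci : c t i ≤ ζ := le_trans (le_abs_self _) (hc i)
              have h2 := h6t i
              linarith
            calc lam i t * (∑ j, B t i j * z t j) ≤ lam i t * (ζ + ε + φ * S) :=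
                  mul_le_mul_of_nonneg_left h1 (hl i).1
              _ ≤ 1 * (ζ + ε + φ * S) := mul_le_mul_of_nonneg_right (hl i).2 hR_nn
              _ = ζ + ε + φ * S := one_mul _
        _ = (p : ℝ) * (ζ + ε) + (p : ℝ) * φ * S := by
            rw [Finset.sum_const, Finset.card_univ, Fintype.card_fin]
            ring
    have hmain' : u t ≤ ((p : ℝ) * (ζ + ε) + (p : ℝ) * φ * S) / σ := by
      rw [le_div_iff₀ hσ]
      linarith
    have hcomb : a0 + b0 * F t = ((p : ℝ) * (ζ + ε) + (p : ℝ) * φ * F t) / σ := by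
      rw [ha0def, hb0def]
      field_simp
    rw [hcomb, ← hS_F]
    exact hmain'
  -- compare F with its "integrated" majorant G
  set g : ℝ → ℝ := fun s => a0 + b0 * F s with hgdef
  have hgcont : Continuous g := continuous_const.add (continuous_const.mul hFcont)
  set G : ℝ → ℝ := fun t => ∫ s in (0:ℝ)..t, g s with hGdef
  have hw_le_g : ∀ᵐ s ∂μ, w s ≤ g s := by
    filter_upwards [hkey, ae_restrict_mem measurableSet_Icc] with s hs hmem
    rw [hwdef]; rw [Set.indicator_of_mem hmem]
    exact hs
  have hFG : ∀ t ∈ Icc (0:ℝ) T, F t ≤ G t := by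
    intro t ht
    have hsub : Icc (0:ℝ) t ⊆ Icc (0:ℝ) T := Icc_subset_Icc le_rfl ht.2
    refine intervalIntegral.integral_mono_ae_restrict ht.1
      hw_int.intervalIntegrable (hgcont.intervalIntegrable 0 t) ?_
    exact ae_restrict_of_ae_restrict_of_subset hsub hw_le_g
  have hGderiv : ∀ x : ℝ, HasDerivAt G (g x) x := fun x =>
    intervalIntegral.integral_hasDerivAt_right (hgcont.intervalIntegrable 0 x)
      (hgcont.stronglyMeasurableAtFilter volume (nhds x)) hgcont.continuousAt
  have hGcont : Continuous G := by
    rw [continuous_iff_continuousAt]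
    exact fun x => (hGderiv x).continuousAt
  have hg_nn : ∀ s ∈ Icc (0:ℝ) T, 0 ≤ g s := fun s hs =>
    add_nonneg ha0nn (mul_nonneg hb0nn (hF_nn s hs.1))
  have hG_nn : ∀ x ∈ Icc (0:ℝ) T, 0 ≤ G x := by
    intro x hx
    refine intervalIntegral.integral_nonneg hx.1 fun s hs => ?_
    exact hg_nn s ⟨hs.1, le_trans hs.2 hx.2⟩
  have hGron : ∀ x ∈ Icc (0:ℝ) T, ‖G x‖ ≤ gronwallBound 0 b0 a0 (x - 0) := by
    refine norm_le_gronwallBound_of_norm_deriv_right_le hGcont.continuousOn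
      (fun x _ => (hGderiv x).hasDerivWithinAt) ?_ ?_
    · simp [hGdef]
    · intro x hx
      have hx' : x ∈ Icc (0:ℝ) T := Ico_subset_Icc_self hx
      have h1 : F x ≤ G x := hFG x hx'
      have h2 : 0 ≤ F x := hF_nn x hx.1
      have h3 : 0 ≤ G x := hG_nn x hx'
      rw [Real.norm_eq_abs, Real.norm_eq_abs,
        abs_of_nonneg (add_nonneg ha0nn (mul_nonneg hb0nn h2)), abs_of_nonneg h3]
      nlinarith
  -- conclude
  filter_upwards [hkey, hznn, ae_restrict_mem measurableSet_Icc] with t hk hzt ht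
  have h1 : ∑ j, |z t j| = u t := by
    rw [hudef]
    exact Finset.sum_congr rfl fun j _ => abs_of_nonneg (hzt j)
  have h2 : F t ≤ G t := hFG t ht
  have h3 := hGron t ht
  rw [Real.norm_eq_abs, abs_of_nonneg (hG_nn t ht)] at h3
  have hb : b0 * G t ≤ a0 * (Real.exp (b0 * t) - 1) := by
    by_cases hb0 : b0 = 0
    · simp [hb0]
    · rw [gronwallBound_of_K_ne_0 hb0, sub_zero] at h3
      calc b0 * G t ≤ b0 * (0 * Real.exp (b0 * t) + a0 / b0 * (Real.exp (b0 * t) - 1)) :=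
            mul_le_mul_of_nonneg_left h3 hb0nn
        _ = a0 * (Real.exp (b0 * t) - 1) := by field_simp; ring
  have hfin : u t ≤ a0 * Real.exp (b0 * t) := by
    have h4 : b0 * F t ≤ b0 * G t := mul_le_mul_of_nonneg_left h2 hb0nn
    linarith
  have harg : (p : ℝ) * φ * t / σ = b0 * t := by rw [hb0def]; ring
  rw [h1, harg]
  exact hfin
end

section
/- Suppose there exists σ > 0 such that Σ_{i=1}^p B_{ij}(t) ≥ σ a.e. in [0,T] for each j = 1,…,q. Define ρ_ε(t) = ((τ−ε)/σ)·exp(ν(T−t)/σ), where τ = max_j ‖a_j‖_∞ and ν = max_j Σ_{i=1}^p ‖K_{ij}‖_∞ and 0 ≤ ε ≤ τ. Then the constant-by-components function w(t) = (ρ_ε(t),…,ρ_ε(t)) ∈ ℝ^p satisfies, for each j and a.e. t ∈ [0,T], Σ_{i=1}^p B_{ij}(t) ρ_ε(t) ≥ a_j(t) − ε + Σ_{i=1}^p ∫ₜᵀ K_{ij}(s,t) ρ_ε(s) ds; i.e., w is a feasible solution of (DCLP_ε). -/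
open MeasureTheory Set

private lemma exp_antideriv (σ ν T : ℝ) (hσ : σ ≠ 0) (hν : ν ≠ 0) (t : ℝ) :
    ∫ s in t..T, Real.exp (ν * (T - s) / σ)
      = (σ / ν) * (Real.exp (ν * (T - t) / σ) - 1) := by
  have key : ∀ s : ℝ, HasDerivAt (fun u => -(σ / ν) * Real.exp (ν * (T - u) / σ))
      (Real.exp (ν * (T - s) / σ)) s := by
    intro s
    have h1 : HasDerivAt (fun u : ℝ => ν * (T - u) / σ) (ν * (0 - 1) / σ) s :=
      (((hasDerivAt_const s T).sub (hasDerivAt_id s)).const_mul ν).div_const σ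
    have h2 := (h1.exp).const_mul (-(σ / ν))
    refine h2.congr_deriv ?_
    have hσν : σ / ν * (ν / σ) = 1 := by
      rw [div_mul_div_comm, mul_comm σ ν, div_self (mul_ne_zero hν hσ)]
    linear_combination (Real.exp (ν * (T - s) / σ)) * hσν
  have hcont : Continuous (fun s : ℝ => Real.exp (ν * (T - s) / σ)) := by
    fun_prop
  rw [intervalIntegral.integral_eq_sub_of_hasDerivAt (fun s _ => key s)
    (hcont.intervalIntegrable t T)]
  simp only [sub_self, mul_zero, zero_div, Real.exp_zero]
  ring

/-- Proposition 3.4(i): the constant-by-components vector ρ_ε is feasible for (DCLP_ε). -/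
theorem dclp_eps_feasible_rho (T : ℝ) (hT : 0 < T) (p q : ℕ)
    (a : ℝ → Fin q → ℝ) (B : ℝ → Fin p → Fin q → ℝ)
    (K : ℝ → ℝ → Fin p → Fin q → ℝ)
    (ε σ τ ν : ℝ) (hσ : 0 < σ) (hν : 0 < ν) (hε : 0 ≤ ε) (hτ : ε ≤ τ)
    (hB : ∀ j, ∀ᵐ t ∂(volume.restrict (Icc 0 T)), σ ≤ ∑ i, B t i j)
    (ha : ∀ j, ∀ᵐ t ∂(volume.restrict (Icc 0 T)), |a t j| ≤ τ)
    (hK : ∀ i j, MemLp (fun x : ℝ × ℝ => K x.1 x.2 i j) ⊤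
      ((volume.restrict (Icc 0 T)).prod (volume.restrict (Icc 0 T))))
    (hKν : ∀ j, ∀ᵐ x ∂((volume.restrict (Icc 0 T)).prod (volume.restrict (Icc 0 T))),
      ∑ i, |K x.1 x.2 i j| ≤ ν) :
    ∀ j, ∀ᵐ t ∂(volume.restrict (Icc 0 T)),
      a t j - ε + ∑ i : Fin p, ∫ s in Icc t T,
          K s t i j * (((τ - ε) / σ) * Real.exp (ν * (T - s) / σ))
        ≤ ∑ i : Fin p, B t i j * (((τ - ε) / σ) * Real.exp (ν * (T - t) / σ)) := by
  intro j
  set μ := volume.restrict (Icc (0:ℝ) T) with hμ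
  -- a.e. slice measurability of the kernel
  have hmeas : ∀ᵐ t ∂μ, ∀ i : Fin p, AEStronglyMeasurable (fun s => K s t i j) μ := by
    rw [ae_all_iff]
    intro i
    have h1 : AEStronglyMeasurable (fun z : ℝ × ℝ => K z.2 z.1 i j) (μ.prod μ) :=
      (hK i j).1.prod_swap
    exact h1.prodMk_left
  -- a.e. slice bound of the kernel
  have hKae : ∀ᵐ t ∂μ, ∀ᵐ s ∂μ, ∑ i, |K s t i j| ≤ ν := by
    have hswap := (Measure.measurePreserving_swap (μ := μ) (ν := μ)).quasiMeasurePreserving.ae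
      (hKν j)
    exact Measure.ae_ae_of_ae_prod hswap
  filter_upwards [hB j, ha j, hmeas, hKae, ae_restrict_mem measurableSet_Icc]
    with t hBt hat hmt hKt ht
  -- setup
  set C : ℝ := (τ - ε) / σ with hC
  set ρ : ℝ → ℝ := fun s => C * Real.exp (ν * (T - s) / σ) with hρ
  have hC0 : 0 ≤ C := div_nonneg (by linarith) hσ.le
  have hρ0 : ∀ s, 0 ≤ ρ s := fun s => mul_nonneg hC0 (Real.exp_pos _).le
  have hρcont : Continuous ρ := by fun_prop
  have hsub : Icc t T ⊆ Icc (0:ℝ) T := Icc_subset_Icc ht.1 le_rfl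
  have hres : μ.restrict (Icc t T) = volume.restrict (Icc t T) := by
    rw [hμ, Measure.restrict_restrict measurableSet_Icc, inter_eq_left.mpr hsub]
  -- restricted a.e. facts
  have hKt' : ∀ᵐ s ∂(volume.restrict (Icc t T)), ∑ i, |K s t i j| ≤ ν := by
    rw [← hres]; exact ae_restrict_of_ae hKt
  have hmt' : ∀ i : Fin p, AEStronglyMeasurable (fun s => K s t i j)
      (volume.restrict (Icc t T)) := by
    intro i; rw [← hres]; exact (hmt i).restrict
  -- bound on ρ on Icc t T
  have hM : ∀ s ∈ Icc t T, ρ s ≤ C * Real.exp (ν * T / σ) := by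
    intro s hs
    apply mul_le_mul_of_nonneg_left _ hC0
    apply Real.exp_le_exp.mpr
    apply div_le_div_of_nonneg_right _ hσ.le
    have h0s : 0 ≤ s := le_trans ht.1 hs.1
    nlinarith [hs.1, hs.2]
  -- integrability of each K(·,t) * ρ on Icc t T
  have hint : ∀ i : Fin p, Integrable (fun s => K s t i j * ρ s)
      (volume.restrict (Icc t T)) := by
    intro i
    apply Integrable.mono' (integrable_const (ν * (C * Real.exp (ν * T / σ))))
      ((hmt' i).mul (hρcont.aestronglyMeasurable.restrict))
    filter_upwards [hKt', ae_restrict_mem measurableSet_Icc] with s hs hsmem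
    have h1 : |K s t i j| ≤ ν := le_trans
      (Finset.single_le_sum (f := fun i => |K s t i j|) (fun i _ => abs_nonneg _)
        (Finset.mem_univ i)) hs
    have h2 : |K s t i j * ρ s| = |K s t i j| * ρ s := by
      rw [abs_mul, abs_of_nonneg (hρ0 s)]
    simp only [Pi.mul_apply, Real.norm_eq_abs]
    rw [h2]
    calc |K s t i j| * ρ s ≤ ν * ρ s :=
          mul_le_mul_of_nonneg_right h1 (hρ0 s)
      _ ≤ ν * (C * Real.exp (ν * T / σ)) :=
          mul_le_mul_of_nonneg_left (hM s hsmem) hν.le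
  have hintν : Integrable (fun s => ν * ρ s) (volume.restrict (Icc t T)) :=
    ((continuous_const.mul hρcont).integrableOn_Icc)
  -- sum of integrals equals the integral of the sum, bounded by ν ∫ ρ
  have hsum : ∑ i : Fin p, ∫ s in Icc t T, K s t i j * ρ s
      = ∫ s in Icc t T, ∑ i : Fin p, K s t i j * ρ s :=
    (integral_finset_sum _ (fun i _ => hint i)).symm
  have hmono : ∫ s in Icc t T, ∑ i : Fin p, K s t i j * ρ s
      ≤ ∫ s in Icc t T, ν * ρ s := by
    apply integral_mono_ae (integrable_finset_sum _ fun i _ => hint i) hintν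
    filter_upwards [hKt'] with s hs
    calc ∑ i : Fin p, K s t i j * ρ s
        ≤ ∑ i : Fin p, |K s t i j| * ρ s :=
          Finset.sum_le_sum fun i _ =>
            mul_le_mul_of_nonneg_right (le_abs_self _) (hρ0 s)
      _ = (∑ i : Fin p, |K s t i j|) * ρ s := (Finset.sum_mul _ _ _).symm
      _ ≤ ν * ρ s := mul_le_mul_of_nonneg_right hs (hρ0 s)
  -- compute ν ∫ ρ
  have hexp : ∫ s in Icc t T, Real.exp (ν * (T - s) / σ)
      = (σ / ν) * (Real.exp (ν * (T - t) / σ) - 1) := by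
    rw [MeasureTheory.integral_Icc_eq_integral_Ioc,
      ← intervalIntegral.integral_of_le ht.2]
    exact exp_antideriv σ ν T hσ.ne' hν.ne' t
  have hconst : ∫ s in Icc t T, ν * ρ s
      = (τ - ε) * (Real.exp (ν * (T - t) / σ) - 1) := by
    simp only [hρ]
    rw [show (fun s => ν * (C * Real.exp (ν * (T - s) / σ)))
        = (fun s => (ν * C) * Real.exp (ν * (T - s) / σ)) by funext s; ring]
    rw [MeasureTheory.integral_const_mul, hexp, hC]
    field_simp
  -- conclude
  have hEs : (1:ℝ) ≤ Real.exp (ν * (T - t) / σ) := by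
    rw [show (1:ℝ) = Real.exp 0 by simp]
    apply Real.exp_le_exp.mpr
    exact div_nonneg (mul_nonneg hν.le (sub_nonneg.mpr ht.2)) hσ.le
  have h1 : ∑ i : Fin p, ∫ s in Icc t T, K s t i j * ρ s
      ≤ (τ - ε) * (Real.exp (ν * (T - t) / σ) - 1) := by
    rw [hsum]; exact hmono.trans_eq hconst
  have h2 : ∑ i : Fin p, B t i j * ρ t = (∑ i : Fin p, B t i j) * ρ t :=
    (Finset.sum_mul _ _ _).symm
  have h3 : a t j ≤ τ := le_of_abs_le hat
  have hρt : ρ t = C * Real.exp (ν * (T - t) / σ) := by rw [hρ]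
  have hσC : σ * C = τ - ε := by rw [hC]; field_simp
  have key : a t j - ε + ∑ i : Fin p, ∫ s in Icc t T, K s t i j * ρ s
      ≤ ∑ i : Fin p, B t i j * ρ t := by
    nlinarith [h1, h2, h3, hρt, hσC, hBt, hρ0 t, hEs,
      mul_nonneg (sub_nonneg.mpr hBt) (hρ0 t)]
  simpa only [hρ, hC] using key
end

section
/- Suppose a sequence {f_k} in L²[0,T] is uniformly bounded in the L²-norm and converges weakly to f₀ ∈ L²[0,T]. Then f₀(t) ≤ limsup_{k→∞} f_k(t) for almost every t ∈ [0,T], and f₀(t) ≥ liminf_{k→∞} f_k(t) for almost every t ∈ [0,T]. -/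
open MeasureTheory Set Filter


set_option maxHeartbeats 1000000 in

lemma levinson_aux (T : ℝ)
    (f : ℕ → ℝ → ℝ) (f₀ : ℝ → ℝ)
    (hf : ∀ k, MemLp (f k) 2 (volume.restrict (Icc 0 T)))
    (hf₀ : MemLp f₀ 2 (volume.restrict (Icc 0 T)))
    (hweak : ∀ g : ℝ → ℝ, MemLp g 2 (volume.restrict (Icc 0 T)) →
      Tendsto (fun k => ∫ t in Icc 0 T, f k t * g t) atTop
        (nhds (∫ t in Icc 0 T, f₀ t * g t))) :
    ∀ᵐ t ∂(volume.restrict (Icc 0 T)),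
        (f₀ t : EReal) ≤ limsup (fun k => ((f k t : ℝ) : EReal)) atTop := by
  set μ := volume.restrict (Icc (0:ℝ) T) with hμ
  haveI : IsFiniteMeasure μ := by
    haveI : Fact (volume (Icc (0:ℝ) T) < ⊤) := ⟨measure_Icc_lt_top⟩
    rw [hμ]; infer_instance
  by_contra hcon
  rw [ae_iff] at hcon
  set E : Set ℝ := {t | ¬ (f₀ t : EReal) ≤ limsup (fun k => ((f k t : ℝ) : EReal)) atTop}
  -- B q r N : points where f k ≤ q for all k ≥ N and f₀ ≥ r
  set B : ℚ → ℚ → ℕ → Set ℝ := fun q r N =>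
    {t | (∀ k, N ≤ k → f k t ≤ (q:ℝ)) ∧ (r:ℝ) ≤ f₀ t} with hB
  have hcover : E ⊆ ⋃ (p : {p : ℚ × ℚ // (p.1 : ℝ) < p.2}) (N : ℕ), B p.1.1 p.1.2 N := by
    intro t ht
    simp only [E, mem_setOf_eq, not_le] at ht
    obtain ⟨x, hx1, hx2⟩ := EReal.exists_between_coe_real ht
    have hx2' : x < f₀ t := by exact_mod_cast hx2
    obtain ⟨q, hq1, hq2⟩ := exists_rat_btwn hx2'
    obtain ⟨r, hr1, hr2⟩ := exists_rat_btwn hq2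
    have hev : ∀ᶠ k in atTop, ((f k t : ℝ) : EReal) < ((q:ℝ) : EReal) := by
      apply eventually_lt_of_limsup_lt (lt_trans hx1 (by exact_mod_cast hq1))
        (isBoundedUnder_of ⟨⊤, fun _ => le_top⟩)
    obtain ⟨N, hN⟩ := hev.exists_forall_of_atTop
    refine mem_iUnion.2 ⟨⟨(q, r), hr1⟩, mem_iUnion.2 ⟨N, ?_⟩⟩
    refine ⟨fun k hk => ?_, le_of_lt hr2⟩
    exact le_of_lt (by exact_mod_cast hN k hk)
  -- some B has positive measure
  have hpos : ∃ (p : {p : ℚ × ℚ // (p.1 : ℝ) < p.2}) (N : ℕ), μ (B p.1.1 p.1.2 N) ≠ 0 := by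
    by_contra h
    push_neg at h
    have : μ (⋃ (p : {p : ℚ × ℚ // (p.1 : ℝ) < p.2}) (N : ℕ), B p.1.1 p.1.2 N) = 0 := by
      refine measure_iUnion_null fun p => measure_iUnion_null fun N => h p N
    exact hcon (le_antisymm (le_trans (measure_mono hcover) this.le) zero_le)
  obtain ⟨⟨⟨q, r⟩, hqr⟩, N, hμB⟩ := hpos
  simp only at hqr hμB
  -- B is null measurable
  have hBnull : NullMeasurableSet (B q r N) μ := by
    have h1 : ∀ k, NullMeasurableSet {t | f k t ≤ (q:ℝ)} μ := by
      intro k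
      have he : {t | f k t ≤ (q:ℝ)} = f k ⁻¹' Iic (q:ℝ) := rfl
      rw [he]
      exact (hf k).1.aemeasurable.nullMeasurable measurableSet_Iic
    have h2 : NullMeasurableSet {t | (r:ℝ) ≤ f₀ t} μ := by
      have he : {t | (r:ℝ) ≤ f₀ t} = f₀ ⁻¹' Ici (r:ℝ) := rfl
      rw [he]
      exact hf₀.1.aemeasurable.nullMeasurable measurableSet_Ici
    have : B q r N = (⋂ k ∈ {k | N ≤ k}, {t | f k t ≤ (q:ℝ)}) ∩ {t | (r:ℝ) ≤ f₀ t} := by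
      ext t; simp [hB]
    rw [this]
    exact (NullMeasurableSet.biInter (to_countable _) (fun k _ => h1 k)).inter h2
  obtain ⟨S, hSsub, hSmeas, hSeq⟩ := hBnull.exists_measurable_subset_ae_eq
  have hμS : μ S ≠ 0 := by rwa [measure_congr hSeq]
  have hμSfin : μ S ≠ ⊤ := (measure_lt_top μ S).ne
  have hμSR : 0 < (μ S).toReal := ENNReal.toReal_pos hμS hμSfin
  -- the test function
  set g : ℝ → ℝ := S.indicator (fun _ => (1:ℝ)) with hg
  have hgmem : MemLp g 2 μ := memLp_indicator_const 2 hSmeas 1 (Or.inr hμSfin)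
  have hmul : ∀ (h : ℝ → ℝ) t, h t * g t = S.indicator h t := by
    intro h t
    simp only [hg, indicator_apply]
    by_cases ht : t ∈ S <;> simp [ht]
  have hint : ∀ h : ℝ → ℝ, (∫ t in Icc 0 T, h t * g t) = ∫ t in S, h t ∂μ := by
    intro h
    rw [show (∫ t in Icc 0 T, h t * g t) = ∫ t, S.indicator h t ∂μ by
      exact integral_congr_ae (Eventually.of_forall fun t => hmul h t)]
    exact integral_indicator hSmeas
  have htend := hweak g hgmem
  rw [hint f₀] at htend
  have htend' : Tendsto (fun k => ∫ t in S, f k t ∂μ) atTop (nhds (∫ t in S, f₀ t ∂μ)) := by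
    refine htend.congr fun k => hint (f k)
  -- upper bound on ∫_S f k for k ≥ N
  have hub : ∀ k, N ≤ k → (∫ t in S, f k t ∂μ) ≤ (q:ℝ) * (μ S).toReal := by
    intro k hk
    have hle : ∀ t ∈ S, f k t ≤ (q:ℝ) := fun t ht => (hSsub ht).1 k hk
    calc (∫ t in S, f k t ∂μ) ≤ ∫ t in S, (q:ℝ) ∂μ := by
          apply setIntegral_mono_on
          · exact ((hf k).integrable (by norm_num)).integrableOn
          · exact integrableOn_const (measure_lt_top _ _).ne
          · exact hSmeas
          · exact hle
      _ = (q:ℝ) * (μ S).toReal := by rw [setIntegral_const, smul_eq_mul, mul_comm]; rfl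
  -- lower bound on ∫_S f₀
  have hlb : (r:ℝ) * (μ S).toReal ≤ ∫ t in S, f₀ t ∂μ := by
    have hle : ∀ t ∈ S, (r:ℝ) ≤ f₀ t := fun t ht => (hSsub ht).2
    calc (r:ℝ) * (μ S).toReal = ∫ t in S, (r:ℝ) ∂μ := by rw [setIntegral_const, smul_eq_mul, mul_comm]; rfl
      _ ≤ ∫ t in S, f₀ t ∂μ := by
          apply setIntegral_mono_on
          · exact integrableOn_const (measure_lt_top _ _).ne
          · exact (hf₀.integrable (by norm_num)).integrableOn
          · exact hSmeas
          · exact hle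
  have hfinal : (∫ t in S, f₀ t ∂μ) ≤ (q:ℝ) * (μ S).toReal :=
    le_of_tendsto htend' (eventually_atTop.2 ⟨N, hub⟩)
  have : (r:ℝ) * (μ S).toReal ≤ (q:ℝ) * (μ S).toReal := le_trans hlb hfinal
  have := (mul_le_mul_iff_of_pos_right hμSR).mp this
  linarith
/-- Levinson's lemma: a weak L² limit is a.e. between the pointwise liminf and limsup. -/
theorem levinson_lemma (T : ℝ) (hT : 0 < T)
    (f : ℕ → ℝ → ℝ) (f₀ : ℝ → ℝ)
    (hf : ∀ k, MemLp (f k) 2 (volume.restrict (Icc 0 T)))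
    (hf₀ : MemLp f₀ 2 (volume.restrict (Icc 0 T)))
    (hbdd : ∃ C : ℝ, ∀ k,
      eLpNorm (f k) 2 (volume.restrict (Icc 0 T)) ≤ ENNReal.ofReal C)
    (hweak : ∀ g : ℝ → ℝ, MemLp g 2 (volume.restrict (Icc 0 T)) →
      Tendsto (fun k => ∫ t in Icc 0 T, f k t * g t) atTop
        (nhds (∫ t in Icc 0 T, f₀ t * g t))) :
    (∀ᵐ t ∂(volume.restrict (Icc 0 T)),
        (f₀ t : EReal) ≤ limsup (fun k => ((f k t : ℝ) : EReal)) atTop) ∧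
    (∀ᵐ t ∂(volume.restrict (Icc 0 T)),
        liminf (fun k => ((f k t : ℝ) : EReal)) atTop ≤ (f₀ t : EReal)) := by
  constructor
  · exact levinson_aux T f f₀ hf hf₀ hweak
  · have hweak' : ∀ g : ℝ → ℝ, MemLp g 2 (volume.restrict (Icc 0 T)) →
        Tendsto (fun k => ∫ t in Icc 0 T, (-(f k t)) * g t) atTop
          (nhds (∫ t in Icc 0 T, (-(f₀ t)) * g t)) := by
      intro g hg
      have h1 : ∀ h : ℝ → ℝ, (∫ t in Icc 0 T, (-(h t)) * g t)
          = -(∫ t in Icc 0 T, h t * g t) := by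
        intro h
        rw [← integral_neg]
        congr 1
        funext t
        ring
      rw [h1 f₀]
      exact Tendsto.congr (fun k => (h1 (f k)).symm) (hweak g hg).neg
    have haux := levinson_aux T (fun k t => -(f k t)) (fun t => -(f₀ t))
      (fun k => (hf k).neg) hf₀.neg hweak'
    filter_upwards [haux] with t ht
    have heq : (fun k => ((-(f k t) : ℝ) : EReal))
        = -(fun k => ((f k t : ℝ) : EReal)) := by
      funext k
      simp [EReal.coe_neg]
    rw [heq, EReal.limsup_neg, EReal.coe_neg, EReal.neg_le_neg_iff] at ht
    exact ht
end

section
/- Assume B(t) ≥ 0 a.e. in [0,T]. Let {ε_k} be a sequence with ε_k → 0⁺, and let z^{(k)} be a feasible solution of (CLP_{ε_k}) such that the sequence {z^{(k)}} is uniformly essentially bounded. Then there exists a subsequence {z^{(k_r)}} converging weakly in L²_q[0,T] to some z⁰ that is a feasible solution of (CLP) (with constraints holding a.e.). -/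
open MeasureTheory Set Filter
open scoped ENNReal NNReal

set_option synthInstance.maxHeartbeats 1000000
set_option maxHeartbeats 2000000

-- helper: membership in L^infinity gives an a.e. bound by a nonnegative constant
lemma aux_bound {α : Type*} [MeasurableSpace α] {ν : Measure α} {f : α → ℝ}
    (hf : MemLp f ⊤ ν) : ∃ Cf : ℝ, 0 ≤ Cf ∧ ∀ᵐ t ∂ν, ‖f t‖ ≤ Cf := by
  refine ⟨(eLpNormEssSup f ν).toReal, ENNReal.toReal_nonneg, ?_⟩
  have htop : eLpNormEssSup f ν ≠ ⊤ := by
    have h2 := hf.2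
    rwa [eLpNorm_exponent_top, lt_top_iff_ne_top] at h2
  filter_upwards [ae_le_eLpNormEssSup (f := f) (μ := ν)] with t ht
  have h1 : ‖f t‖ = ((‖f t‖₊ : ℝ≥0∞)).toReal := by simp
  rw [h1]
  exact ENNReal.toReal_mono htop ht

/-- Proposition 3.2(i) -/
theorem clp_weak_limit_feasible (T : ℝ) (hT : 0 < T) (p q : ℕ)
    (c : ℝ → Fin p → ℝ) (B : ℝ → Fin p → Fin q → ℝ)
    (K : ℝ → ℝ → Fin p → Fin q → ℝ)
    (hc : ∀ i, MemLp (fun t => c t i) ⊤ (volume.restrict (Icc 0 T)))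
    (hB : ∀ i j, MemLp (fun t => B t i j) ⊤ (volume.restrict (Icc 0 T)))
    (hBnn : ∀ᵐ t ∂(volume.restrict (Icc 0 T)), ∀ i j, 0 ≤ B t i j)
    (hK : ∀ i j, MemLp (fun x : ℝ × ℝ => K x.1 x.2 i j) ⊤
      ((volume.restrict (Icc 0 T)).prod (volume.restrict (Icc 0 T))))
    (ε : ℕ → ℝ) (hεpos : ∀ k, 0 < ε k) (hεlim : Tendsto ε atTop (nhds 0))
    (z : ℕ → ℝ → Fin q → ℝ)
    (hz : ∀ k j, MemLp (fun t => z k t j) ⊤ (volume.restrict (Icc 0 T)))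
    (hbdd : ∃ C : ℝ, ∀ k j, ∀ᵐ t ∂(volume.restrict (Icc 0 T)), |z k t j| ≤ C)
    (hznn : ∀ k, ∀ᵐ t ∂(volume.restrict (Icc 0 T)), ∀ j, 0 ≤ z k t j)
    (hzfeas : ∀ k, ∀ᵐ t ∂(volume.restrict (Icc 0 T)), ∀ i,
      ∑ j, B t i j * z k t j
        ≤ c t i + ε k + ∫ s in Icc 0 t, ∑ j, K t s i j * z k s j) :
    ∃ φ : ℕ → ℕ, StrictMono φ ∧ ∃ z0 : ℝ → Fin q → ℝ,
      (∀ j, MemLp (fun t => z0 t j) 2 (volume.restrict (Icc 0 T))) ∧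
      (∀ g : ℝ → ℝ, MemLp g 2 (volume.restrict (Icc 0 T)) → ∀ j,
        Tendsto (fun r => ∫ t in Icc 0 T, z (φ r) t j * g t) atTop
          (nhds (∫ t in Icc 0 T, z0 t j * g t))) ∧
      (∀ᵐ t ∂(volume.restrict (Icc 0 T)), ∀ j, 0 ≤ z0 t j) ∧
      (∀ᵐ t ∂(volume.restrict (Icc 0 T)), ∀ i,
        ∑ j, B t i j * z0 t j
          ≤ c t i + ∫ s in Icc 0 t, ∑ j, K t s i j * z0 s j) := by
  classical
  obtain ⟨C, hC⟩ := hbdd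
  set μ : Measure ℝ := volume.restrict (Icc (0:ℝ) T) with hμdef
  haveI : IsFiniteMeasure μ := by
    constructor
    rw [hμdef, Measure.restrict_apply_univ]
    exact measure_Icc_lt_top
  haveI : Fact ((2:ℝ≥0∞) ≠ ∞) := ⟨by norm_num⟩
  have hz2 : ∀ k j, MemLp (fun t => z k t j) 2 μ := fun k j =>
    (hz k j).mono_exponent le_top
  set Z : ℕ → Fin q → Lp ℝ 2 μ := fun k j => (hz2 k j).toLp _ with hZdef
  set M : ℝ := ((μ univ) ^ (2:ℝ≥0∞).toReal⁻¹ * ENNReal.ofReal C).toReal with hMdef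
  have hM0 : 0 ≤ M := ENNReal.toReal_nonneg
  have hMbound : ∀ k j, ‖Z k j‖ ≤ M := by
    intro k j
    rw [hZdef, Lp.norm_toLp]
    have hb : ∀ᵐ t ∂μ, ‖z k t j‖ ≤ C :=
      (hC k j).mono fun t ht => by simpa [Real.norm_eq_abs] using ht
    refine ENNReal.toReal_mono ?_ (eLpNorm_le_of_ae_bound (p := 2) (μ := μ) hb)
    refine ENNReal.mul_ne_top ?_ ENNReal.ofReal_ne_top
    exact (ENNReal.rpow_lt_top_of_nonneg (by positivity) (measure_ne_top μ _)).ne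
  -- dense sequence
  set e : ℕ → Lp ℝ 2 μ := TopologicalSpace.denseSeq _ with hedef
  have he : DenseRange e := TopologicalSpace.denseRange_denseSeq _
  set u : ℕ → (ℕ × Fin q) → ℝ := fun k nj => (inner ℝ (Z k nj.2) (e nj.1) : ℝ) with hudef
  have hu_mem : ∀ k, u k ∈ Set.pi Set.univ
      (fun nj : ℕ × Fin q => Icc (-(M * ‖e nj.1‖)) (M * ‖e nj.1‖)) := by
    intro k nj _
    rw [Set.mem_Icc, ← abs_le]
    exact (abs_real_inner_le_norm _ _).trans
      (mul_le_mul_of_nonneg_right (hMbound k nj.2) (norm_nonneg _))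
  obtain ⟨L, -, φ, hφmono, hφlim⟩ :=
    (isCompact_univ_pi (fun nj : ℕ × Fin q => isCompact_Icc)).tendsto_subseq hu_mem
  have hφcoord : ∀ nj, Tendsto (fun r => u (φ r) nj) atTop (nhds (L nj)) := by
    intro nj
    exact (tendsto_pi_nhds.mp hφlim) nj
  -- Cauchy for arbitrary g
  have hcauchy : ∀ (j : Fin q) (g : Lp ℝ 2 μ), ∃ l,
      Tendsto (fun r => (inner ℝ (Z (φ r) j) g : ℝ)) atTop (nhds l) := by
    intro j g
    refine cauchySeq_tendsto_of_complete ?_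
    rw [Metric.cauchySeq_iff]
    intro δ hδ
    have hδ' : 0 < δ / 2 / (2 * M + 1) := by positivity
    obtain ⟨n, hn⟩ := Metric.denseRange_iff.mp he g (δ / 2 / (2 * M + 1)) hδ'
    have hc := (hφcoord (n, j)).cauchySeq
    rw [Metric.cauchySeq_iff] at hc
    obtain ⟨N, hN⟩ := hc (δ / 2) (by positivity)
    refine ⟨N, fun a ha b hb => ?_⟩
    have key : ∀ k, |(inner ℝ (Z k j) g : ℝ) - inner ℝ (Z k j) (e n)| ≤ δ / 4 := by
      intro k
      rw [← inner_sub_right]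
      refine (abs_real_inner_le_norm _ _).trans ?_
      have h1 : ‖g - e n‖ ≤ δ / 2 / (2 * M + 1) := by
        rw [← dist_eq_norm]
        exact hn.le
      calc ‖Z k j‖ * ‖g - e n‖ ≤ M * (δ / 2 / (2 * M + 1)) :=
            mul_le_mul (hMbound k j) h1 (norm_nonneg _) hM0
        _ ≤ δ / 4 := by
            rw [div_div]
            rw [mul_div_assoc']
            rw [div_le_div_iff₀ (by positivity) (by norm_num)]
            nlinarith [hδ.le, hM0]
    have hab := hN a ha b hb
    have hud : dist (u (φ a) (n, j)) (u (φ b) (n, j)) < δ / 2 := hab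
    rw [Real.dist_eq] at hud ⊢
    have huda : u (φ a) (n, j) = (inner ℝ (Z (φ a) j) (e n) : ℝ) := rfl
    have hudb : u (φ b) (n, j) = (inner ℝ (Z (φ b) j) (e n) : ℝ) := rfl
    rw [huda, hudb] at hud
    have t1 := key (φ a)
    have t2 := key (φ b)
    set x1 := (inner ℝ (Z (φ a) j) g : ℝ)
    set x2 := (inner ℝ (Z (φ b) j) g : ℝ)
    set y1 := (inner ℝ (Z (φ a) j) (e n) : ℝ)
    set y2 := (inner ℝ (Z (φ b) j) (e n) : ℝ)
    calc |x1 - x2| ≤ |x1 - y1| + |y1 - y2| + |y2 - x2| := by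
          have := abs_sub_le x1 y1 x2
          have := abs_sub_le y1 y2 x2
          linarith [abs_sub_le x1 y1 y2, abs_sub_le y1 y2 x2, abs_sub_abs_le_abs_sub x1 x2]
      _ < δ / 4 + δ / 2 + δ / 4 := by
          refine add_lt_add_of_lt_of_le (add_lt_add_of_le_of_lt t1 hud) ?_
          rw [abs_sub_comm]
          exact t2
      _ ≤ δ := by linarith
  -- limit functionals and Riesz representation
  have hl : ∀ (j : Fin q) (g : Lp ℝ 2 μ),
      Tendsto (fun r => (inner ℝ (Z (φ r) j) g : ℝ)) atTop
        (nhds (Classical.choose (hcauchy j g))) :=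
    fun j g => Classical.choose_spec (hcauchy j g)
  set l : Fin q → Lp ℝ 2 μ → ℝ := fun j g => Classical.choose (hcauchy j g) with hldef
  have hladd : ∀ j g₁ g₂, l j (g₁ + g₂) = l j g₁ + l j g₂ := by
    intro j g₁ g₂
    refine tendsto_nhds_unique (hl j (g₁ + g₂)) ?_
    have := (hl j g₁).add (hl j g₂)
    simpa [inner_add_right] using this
  have hlsmul : ∀ j (a : ℝ) g, l j (a • g) = a * l j g := by
    intro j a g
    refine tendsto_nhds_unique (hl j (a • g)) ?_
    have := (hl j g).const_mul a
    simpa [inner_smul_right] using this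
  have hlbound : ∀ j g, |l j g| ≤ M * ‖g‖ := by
    intro j g
    refine le_of_tendsto (hl j g).abs (Eventually.of_forall fun r => ?_)
    exact (abs_real_inner_le_norm _ _).trans
      (mul_le_mul_of_nonneg_right (hMbound _ _) (norm_nonneg _))
  set ℓ : Fin q → (Lp ℝ 2 μ →L[ℝ] ℝ) := fun j =>
    LinearMap.mkContinuous
      { toFun := l j
        map_add' := hladd j
        map_smul' := hlsmul j } M
      (fun g => by simpa [Real.norm_eq_abs] using hlbound j g) with hℓdef
  set w : Fin q → Lp ℝ 2 μ := fun j => (InnerProductSpace.toDual ℝ _).symm (ℓ j) with hwdef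
  have hw : ∀ j g, Tendsto (fun r => (inner ℝ (Z (φ r) j) g : ℝ)) atTop
      (nhds (inner ℝ (w j) g : ℝ)) := by
    intro j g
    have : (inner ℝ (w j) g : ℝ) = ℓ j g := InnerProductSpace.toDual_symm_apply
    rw [this]
    exact hl j g
  set z0 : ℝ → Fin q → ℝ := fun t j => w j t with hz0def
  have hz0mem : ∀ j, MemLp (fun t => z0 t j) 2 μ := fun j => Lp.memLp (w j)
  -- bridge between inner products and integrals
  have hinner : ∀ (x : Lp ℝ 2 μ) (g : ℝ → ℝ) (hg : MemLp g 2 μ),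
      (inner ℝ x (hg.toLp g) : ℝ) = ∫ t, x t * g t ∂μ := by
    intro x g hg
    rw [L2.inner_def]
    refine integral_congr_ae ?_
    filter_upwards [hg.coeFn_toLp] with t h2
    rw [h2]
    simp [mul_comm]
  have hweak : ∀ (g : ℝ → ℝ), MemLp g 2 μ → ∀ j,
      Tendsto (fun r => ∫ t, z (φ r) t j * g t ∂μ) atTop
        (nhds (∫ t, z0 t j * g t ∂μ)) := by
    intro g hg j
    have h1 := hw j (hg.toLp g)
    rw [hinner (w j) g hg] at h1
    have h2 : ∀ k, ∫ t, z k t j * g t ∂μ = (inner ℝ (Z k j) (hg.toLp g) : ℝ) := by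
      intro k
      rw [hinner (Z k j) g hg]
      refine integral_congr_ae ?_
      filter_upwards [(hz2 k j).coeFn_toLp] with t ht
      rw [ht]
    simp only [h2]
    exact h1
  -- nonnegativity of the limit
  have hindic : ∀ (v : Set ℝ), MeasurableSet v → ∀ (ζ : ℝ → ℝ),
      ∫ t, ζ t * Set.indicator v (fun _ => (1:ℝ)) t ∂μ = ∫ t in v, ζ t ∂μ := by
    intro v hv ζ
    rw [← integral_indicator hv]
    congr 1
    funext t
    by_cases ht : t ∈ v <;>
      simp [Set.indicator_of_mem, Set.indicator_of_notMem, ht]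
  have hz0nn : ∀ᵐ t ∂μ, ∀ j, 0 ≤ z0 t j := by
    rw [ae_all_iff]
    intro j
    have hint : Integrable (fun t => z0 t j) μ := (hz0mem j).integrable one_le_two
    refine ae_nonneg_of_forall_setIntegral_nonneg hint ?_
    intro v hv _
    have hg : MemLp (Set.indicator v (fun _ => (1:ℝ))) 2 μ := (memLp_const 1).indicator hv
    have h := hweak _ hg j
    simp only [hindic v hv] at h
    refine ge_of_tendsto h (Eventually.of_forall fun r => ?_)
    refine setIntegral_nonneg_ae hv ?_
    filter_upwards [hznn (φ r)] with t ht
    exact fun _ => ht j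
  -- integrability of components
  have hz0int : ∀ j, Integrable (fun t => z0 t j) μ := fun j => (hz0mem j).integrable one_le_two
  have hzint : ∀ k j, Integrable (fun t => z k t j) μ := fun k j =>
    (hz2 k j).integrable one_le_two
  -- feasibility of the limit
  have hfeas : ∀ᵐ t ∂μ, ∀ i, ∑ j, B t i j * z0 t j
      ≤ c t i + ∫ s in Icc 0 t, ∑ j, K t s i j * z0 s j := by
    rw [ae_all_iff]
    intro i
    have hc_int : Integrable (fun t => c t i) μ := (hc i).integrable le_top
    set indK : Fin q → ℝ × ℝ → ℝ := fun j =>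
      Set.indicator {x : ℝ × ℝ | x.2 ≤ x.1} (fun x => K x.1 x.2 i j) with hindKdef
    have hsetK : MeasurableSet {x : ℝ × ℝ | x.2 ≤ x.1} :=
      measurableSet_le measurable_snd measurable_fst
    have hindK_meas : ∀ j, AEStronglyMeasurable (indK j) (μ.prod μ) := fun j =>
      (hK i j).aestronglyMeasurable.indicator hsetK
    have hindK_bd : ∀ j, ∃ CK, 0 ≤ CK ∧ ∀ᵐ x ∂(μ.prod μ), ‖indK j x‖ ≤ CK := by
      intro j
      obtain ⟨CK, h0, hb⟩ := aux_bound (hK i j)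
      refine ⟨CK, h0, hb.mono fun x hx => ?_⟩
      by_cases hmem : x ∈ {x : ℝ × ℝ | x.2 ≤ x.1}
      · rw [hindKdef]
        simp only [Set.indicator_of_mem hmem]
        exact hx
      · rw [hindKdef]
        simp only [Set.indicator_of_notMem hmem]
        simpa using h0
    have hprod_int : ∀ (j : Fin q) (ζ : ℝ → ℝ), Integrable ζ μ →
        Integrable (fun x : ℝ × ℝ => indK j x * ζ x.2) (μ.prod μ) := by
      intro j ζ hζ
      obtain ⟨CK, h0, hb⟩ := hindK_bd j
      have hsnd : Integrable (fun x : ℝ × ℝ => ζ x.2) (μ.prod μ) := by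
        simpa using (integrable_const (1:ℝ)).mul_prod hζ
      exact hsnd.bdd_mul (hindK_meas j) hb
    -- a.e. representation of the inner integral
    have hIrep : ∀ (ζ : ℝ → Fin q → ℝ), (∀ j, Integrable (fun t => ζ t j) μ) →
        ∀ᵐ t ∂μ, (∫ s in Icc 0 t, ∑ j, K t s i j * ζ s j)
          = ∫ s, ∑ j, indK j (t, s) * ζ s j ∂μ := by
      intro ζ hζ
      filter_upwards [ae_restrict_mem measurableSet_Icc] with t ht
      have h1 : ∀ s : ℝ, (∑ j, indK j (t, s) * ζ s j)
          = Set.indicator (Iic t) (fun s => ∑ j, K t s i j * ζ s j) s := by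
        intro s
        by_cases hst : s ≤ t
        · rw [Set.indicator_of_mem (by exact hst : s ∈ Iic t)]
          refine Finset.sum_congr rfl fun j _ => ?_
          have hmem : (t, s) ∈ {x : ℝ × ℝ | x.2 ≤ x.1} := hst
          rw [hindKdef]
          simp only [Set.indicator_of_mem hmem]
        · rw [Set.indicator_of_notMem (by simpa using hst)]
          refine Finset.sum_eq_zero fun j _ => ?_
          have hmem : (t, s) ∉ {x : ℝ × ℝ | x.2 ≤ x.1} := hst
          rw [hindKdef]
          simp only [Set.indicator_of_notMem hmem, zero_mul]
      simp only [h1]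
      rw [integral_indicator measurableSet_Iic]
      rw [hμdef, Measure.restrict_restrict measurableSet_Iic]
      have hset2 : Iic t ∩ Icc (0:ℝ) T = Icc 0 t := by
        ext x
        simp only [mem_inter_iff, mem_Iic, mem_Icc]
        constructor
        · rintro ⟨h1x, h2x, h3x⟩
          exact ⟨h2x, h1x⟩
        · rintro ⟨h1x, h2x⟩
          exact ⟨h2x, h1x, h2x.trans ht.2⟩
      rw [hset2]
    -- integrability of the inner-integral function
    have hI_int : ∀ (ζ : ℝ → Fin q → ℝ), (∀ j, Integrable (fun t => ζ t j) μ) →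
        Integrable (fun t => ∫ s in Icc 0 t, ∑ j, K t s i j * ζ s j) μ := by
      intro ζ hζ
      have hF : Integrable (fun x : ℝ × ℝ => ∑ j, indK j x * ζ x.2 j) (μ.prod μ) :=
        integrable_finset_sum _ fun j _ => hprod_int j _ (hζ j)
      have h1 : Integrable (fun t => ∫ s, ∑ j, indK j (t, s) * ζ s j ∂μ) μ :=
        hF.integral_prod_left
      exact h1.congr ((hIrep ζ hζ).mono fun t ht => ht.symm)
    have hA_int : ∀ (ζ : ℝ → Fin q → ℝ), (∀ j, Integrable (fun t => ζ t j) μ) →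
        Integrable (fun t => ∑ j, B t i j * ζ t j) μ := by
      intro ζ hζ
      refine integrable_finset_sum _ fun j _ => ?_
      obtain ⟨Cb, h0, hb⟩ := aux_bound (hB i j)
      exact (hζ j).bdd_mul (hB i j).aestronglyMeasurable hb
    -- the key set-integral inequality
    have key_i : ∀ (v : Set ℝ), MeasurableSet v →
        (∫ t in v, ∑ j, B t i j * z0 t j ∂μ)
          ≤ (∫ t in v, c t i ∂μ)
            + ∫ t in v, (∫ s in Icc 0 t, ∑ j, K t s i j * z0 s j) ∂μ := by
      intro v hv
      set ind1 : ℝ → ℝ := Set.indicator v (fun _ => (1:ℝ)) with hind1def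
      have hind1_meas : Measurable ind1 := measurable_const.indicator hv
      have hind1_bd : ∀ t, ‖ind1 t‖ ≤ 1 := by
        intro t
        rw [hind1def]
        by_cases htv : t ∈ v <;>
          simp [Set.indicator_of_mem, Set.indicator_of_notMem, htv]
      set h : Fin q → ℝ → ℝ := fun j s => ∫ t, ind1 t * indK j (t, s) ∂μ with hhdef
      have hh_meas : ∀ j, AEStronglyMeasurable (h j) μ := by
        intro j
        have h1 : AEStronglyMeasurable (fun x : ℝ × ℝ => ind1 x.1 * indK j x) (μ.prod μ) :=
          ((hind1_meas.comp measurable_fst).aestronglyMeasurable).mul (hindK_meas j)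
        have h2 := h1.prod_swap
        exact h2.integral_prod_right'
      have hh_bd : ∀ j, ∃ Ch, 0 ≤ Ch ∧ ∀ᵐ s ∂μ, ‖h j s‖ ≤ Ch := by
        intro j
        obtain ⟨CK, hCK0, hb⟩ := hindK_bd j
        have hswap : ∀ᵐ x ∂(μ.prod μ), ‖indK j x.swap‖ ≤ CK :=
          (Measure.measurePreserving_swap).quasiMeasurePreserving.ae hb
        have h2 := Measure.ae_ae_of_ae_prod hswap
        refine ⟨CK * (μ univ).toReal, by positivity, ?_⟩
        filter_upwards [h2] with s hs
        refine norm_integral_le_of_norm_le_const ?_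
        filter_upwards [hs] with t ht
        calc ‖ind1 t * indK j (t, s)‖ = ‖ind1 t‖ * ‖indK j (t, s)‖ := norm_mul _ _
          _ ≤ 1 * CK := mul_le_mul (hind1_bd t) ht (norm_nonneg _) zero_le_one
          _ = CK := one_mul _
      have hh_mem : ∀ j, MemLp (h j) 2 μ := by
        intro j
        obtain ⟨Ch, h0, hb⟩ := hh_bd j
        exact (memLp_top_of_bound (hh_meas j) Ch hb).mono_exponent le_top
      have hh_int : ∀ (j : Fin q) (ζ : ℝ → Fin q → ℝ),
          (∀ j', Integrable (fun t => ζ t j') μ) →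
          Integrable (fun s => ζ s j * h j s) μ := by
        intro j ζ hζ
        obtain ⟨Ch, h0, hb⟩ := hh_bd j
        exact ((hζ j).bdd_mul (hh_meas j) hb).congr
          (Eventually.of_forall fun s => mul_comm _ _)
      have hSrep : ∀ (ζ : ℝ → Fin q → ℝ), (∀ j, Integrable (fun t => ζ t j) μ) →
          ∫ t in v, (∫ s in Icc 0 t, ∑ j, K t s i j * ζ s j) ∂μ
            = ∑ j, ∫ s, ζ s j * h j s ∂μ := by
        intro ζ hζ
        have hFj : ∀ j, Integrable
            (fun x : ℝ × ℝ => ind1 x.1 * (indK j x * ζ x.2 j)) (μ.prod μ) :=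
          fun j => (hprod_int j _ (hζ j)).bdd_mul
            ((hind1_meas.comp measurable_fst).aestronglyMeasurable)
            (Eventually.of_forall fun x => hind1_bd x.1)
        have step1 : ∫ t in v, (∫ s in Icc 0 t, ∑ j, K t s i j * ζ s j) ∂μ
            = ∫ t, ∫ s, ∑ j, ind1 t * (indK j (t, s) * ζ s j) ∂μ ∂μ := by
          rw [← integral_indicator hv]
          refine integral_congr_ae ?_
          filter_upwards [hIrep ζ hζ] with t ht
          by_cases htv : t ∈ v
          · have he1 : ind1 t = 1 := by
              rw [hind1def]; exact Set.indicator_of_mem htv _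
            rw [Set.indicator_of_mem htv, ht]
            simp only [he1, one_mul]
          · have he0 : ind1 t = 0 := by
              rw [hind1def]; exact Set.indicator_of_notMem htv _
            rw [Set.indicator_of_notMem htv]
            simp only [he0, zero_mul]
            simp
        have hFsum : Integrable
            (Function.uncurry fun t s => ∑ j, ind1 t * (indK j (t, s) * ζ s j)) (μ.prod μ) := by
          have heq : (Function.uncurry fun t s => ∑ j, ind1 t * (indK j (t, s) * ζ s j))
              = fun x : ℝ × ℝ => ∑ j, ind1 x.1 * (indK j x * ζ x.2 j) := rfl
          rw [heq]
          exact integrable_finset_sum _ fun j _ => hFj j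
        have step2 := integral_integral_swap hFsum
        have step3 : ∀ᵐ s ∂μ, (∫ t, ∑ j, ind1 t * (indK j (t, s) * ζ s j) ∂μ)
            = ∑ j, ζ s j * h j s := by
          have hslice : ∀ᵐ s ∂μ, ∀ j,
              Integrable (fun t => ind1 t * (indK j (t, s) * ζ s j)) μ :=
            ae_all_iff.mpr fun j => (hFj j).prod_left_ae
          filter_upwards [hslice] with s hs
          rw [integral_finset_sum _ (fun j _ => hs j)]
          refine Finset.sum_congr rfl fun j _ => ?_
          have heq2 : (fun t => ind1 t * (indK j (t, s) * ζ s j))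
              = fun t => (ind1 t * indK j (t, s)) * ζ s j := by funext t; ring
          rw [heq2, integral_mul_const, mul_comm]
        rw [step1, step2, integral_congr_ae step3]
        exact integral_finset_sum _ fun j _ => hh_int j ζ hζ
      have hBrep : ∀ (ζ : ℝ → Fin q → ℝ), (∀ j, Integrable (fun t => ζ t j) μ) →
          ∫ t in v, (∑ j, B t i j * ζ t j) ∂μ
            = ∑ j, ∫ t, ζ t j * Set.indicator v (fun t => B t i j) t ∂μ := by
        intro ζ hζ
        have hint : ∀ j, Integrable (fun t => B t i j * ζ t j) μ := by
          intro j
          obtain ⟨Cb, h0, hb⟩ := aux_bound (hB i j)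
          exact (hζ j).bdd_mul (hB i j).aestronglyMeasurable hb
        rw [integral_finset_sum _ (fun j _ => (hint j).restrict)]
        refine Finset.sum_congr rfl fun j _ => ?_
        rw [← integral_indicator hv]
        refine integral_congr_ae (Eventually.of_forall fun t => ?_)
        by_cases htv : t ∈ v <;>
          simp [Set.indicator_of_mem, Set.indicator_of_notMem, htv, mul_comm]
      have hgB_mem : ∀ j, MemLp (Set.indicator v (fun t => B t i j)) 2 μ := fun j =>
        ((hB i j).indicator hv).mono_exponent le_top
      have hlim1 : Tendsto (fun r => ∫ t in v, ∑ j, B t i j * z (φ r) t j ∂μ) atTop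
          (nhds (∫ t in v, ∑ j, B t i j * z0 t j ∂μ)) := by
        rw [hBrep z0 hz0int]
        have heq : (fun r => ∫ t in v, ∑ j, B t i j * z (φ r) t j ∂μ)
            = fun r => ∑ j, ∫ t, z (φ r) t j * Set.indicator v (fun t => B t i j) t ∂μ := by
          funext r
          exact hBrep (z (φ r)) (fun j => hzint (φ r) j)
        rw [heq]
        exact tendsto_finset_sum _ fun j _ => hweak _ (hgB_mem j) j
      have hlim2 : Tendsto
          (fun r => ∫ t in v, (∫ s in Icc 0 t, ∑ j, K t s i j * z (φ r) s j) ∂μ) atTop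
          (nhds (∫ t in v, (∫ s in Icc 0 t, ∑ j, K t s i j * z0 s j) ∂μ)) := by
        rw [hSrep z0 hz0int]
        have heq : (fun r => ∫ t in v, (∫ s in Icc 0 t, ∑ j, K t s i j * z (φ r) s j) ∂μ)
            = fun r => ∑ j, ∫ s, z (φ r) s j * h j s ∂μ := by
          funext r
          exact hSrep (z (φ r)) (fun j => hzint (φ r) j)
        rw [heq]
        exact tendsto_finset_sum _ fun j _ => hweak _ (hh_mem j) j
      have hlim3 : Tendsto (fun r => (μ v).toReal * ε (φ r)) atTop (nhds 0) := by
        have := (hεlim.comp (hφmono.tendsto_atTop)).const_mul ((μ v).toReal)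
        simpa using this
      have hstep : ∀ r, ∫ t in v, ∑ j, B t i j * z (φ r) t j ∂μ
          ≤ (∫ t in v, c t i ∂μ) + (μ v).toReal * ε (φ r)
            + ∫ t in v, (∫ s in Icc 0 t, ∑ j, K t s i j * z (φ r) s j) ∂μ := by
        intro r
        have hle : ∀ᵐ t ∂(μ.restrict v), ∑ j, B t i j * z (φ r) t j
            ≤ c t i + ε (φ r) + ∫ s in Icc 0 t, ∑ j, K t s i j * z (φ r) s j :=
          ae_restrict_of_ae ((hzfeas (φ r)).mono fun t ht => ht i)
        have hint1 : Integrable (fun t => ∑ j, B t i j * z (φ r) t j) (μ.restrict v) :=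
          (hA_int _ (fun j => hzint (φ r) j)).restrict
        have ha1 : Integrable (fun t => c t i + ε (φ r)) (μ.restrict v) :=
          hc_int.restrict.add (integrable_const _)
        have ha2 : Integrable
            (fun t => ∫ s in Icc 0 t, ∑ j, K t s i j * z (φ r) s j) (μ.restrict v) :=
          (hI_int _ (fun j => hzint (φ r) j)).restrict
        have hint2 : Integrable (fun t => c t i + ε (φ r)
            + ∫ s in Icc 0 t, ∑ j, K t s i j * z (φ r) s j) (μ.restrict v) := ha1.add ha2
        refine (integral_mono_ae hint1 hint2 hle).trans_eq ?_
        rw [integral_add ha1 ha2, integral_add hc_int.restrict (integrable_const _),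
          integral_const, measureReal_restrict_apply_univ, smul_eq_mul, measureReal_def]
      have hfinal := le_of_tendsto_of_tendsto' hlim1
        ((tendsto_const_nhds.add hlim3).add hlim2) hstep
      simpa using hfinal
    -- conclude by the density argument
    have hD_int : Integrable (fun t =>
        (c t i + ∫ s in Icc 0 t, ∑ j, K t s i j * z0 s j) - ∑ j, B t i j * z0 t j) μ :=
      (hc_int.add (hI_int z0 hz0int)).sub (hA_int z0 hz0int)
    have hae := ae_nonneg_of_forall_setIntegral_nonneg hD_int ?_
    · filter_upwards [hae] with t ht
      have : (0:ℝ) ≤ (c t i + ∫ s in Icc 0 t, ∑ j, K t s i j * z0 s j)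
          - ∑ j, B t i j * z0 t j := ht
      linarith
    · intro v hv _
      have h1 : Integrable (fun t => c t i + ∫ s in Icc 0 t, ∑ j, K t s i j * z0 s j)
          (μ.restrict v) := (hc_int.add (hI_int z0 hz0int)).restrict
      have h2 : Integrable (fun t => ∑ j, B t i j * z0 t j) (μ.restrict v) :=
        (hA_int z0 hz0int).restrict
      rw [integral_sub h1 h2, integral_add hc_int.restrict (hI_int z0 hz0int).restrict,
        sub_nonneg]
      exact key_i v hv
  exact ⟨φ, hφmono, z0, hz0mem, hweak, hz0nn, hfeas⟩
end

section
/- Assume B(t) ≥ 0 a.e. in [0,T], (CLP_ε) is feasible, and the feasible set of (CLP_ε) is uniformly essentially bounded. Then (CLP_ε) has an optimal solution z̄ with z̄(t) ≥ 0 for all t ∈ [0,T]; that is, the supremum of ∫₀ᵀ a(t)ᵀz(t)dt over feasible z is attained. -/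
open MeasureTheory Set

open Metric Filter
open scoped ENNReal NNReal

/-- A solution `z` is feasible for (CLP_ε). -/
def ClpFeasible (T : ℝ) (p q : ℕ) (c : ℝ → Fin p → ℝ)
    (B : ℝ → Fin p → Fin q → ℝ) (K : ℝ → ℝ → Fin p → Fin q → ℝ)
    (ε : ℝ) (z : ℝ → Fin q → ℝ) : Prop :=
  (∀ j, MemLp (fun t => z t j) ⊤ (volume.restrict (Icc 0 T))) ∧
  (∀ᵐ t ∂(volume.restrict (Icc 0 T)), ∀ j, 0 ≤ z t j) ∧
  (∀ᵐ t ∂(volume.restrict (Icc 0 T)), ∀ i,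
    ∑ j, B t i j * z t j ≤ c t i + ε + ∫ s in Icc 0 t, ∑ j, K t s i j * z s j)


lemma exists_isMaxOn_inner {H : Type*} [NormedAddCommGroup H] [InnerProductSpace ℝ H]
    [CompleteSpace H] (A : H) {S : Set H} (hne : S.Nonempty) (hconv : Convex ℝ S)
    (hclosed : IsClosed S) {R : ℝ} (hbdd : ∀ x ∈ S, ‖x‖ ≤ R) :
    ∃ f ∈ S, ∀ g ∈ S, (inner ℝ A g : ℝ) ≤ inner ℝ A f := by
  set L : H → ℝ := fun g => inner ℝ A g with hL
  have hLcont : Continuous L := (innerSL ℝ A).continuous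
  have hLlin : IsLinearMap ℝ L :=
    ⟨fun x y => inner_add_right A x y, fun c x => real_inner_smul_right A x c⟩
  have himne : (L '' S).Nonempty := hne.image L
  have himbdd : BddAbove (L '' S) := by
    refine ⟨‖A‖ * R, ?_⟩
    rintro - ⟨x, hx, rfl⟩
    calc L x ≤ ‖A‖ * ‖x‖ := real_inner_le_norm A x
      _ ≤ ‖A‖ * R := by
        have := hbdd x hx
        nlinarith [norm_nonneg A, norm_nonneg x]
  set M : ℝ := sSup (L '' S) with hM
  set Kn : ℕ → Set H := fun n => {g ∈ S | M - 1 / (n + 1) ≤ L g} with hKn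
  have hKne : ∀ n, (Kn n).Nonempty := by
    intro n
    have h1 : M - 1 / (n + 1 : ℝ) < M := by
      have : (0 : ℝ) < 1 / (n + 1) := by positivity
      linarith
    obtain ⟨y, ⟨x, hx, rfl⟩, hy⟩ := exists_lt_of_lt_csSup himne h1
    exact ⟨x, hx, hy.le⟩
  have hKsub : ∀ n, Kn n ⊆ S := fun n x hx => hx.1
  have hKconv : ∀ n, Convex ℝ (Kn n) := fun n =>
    hconv.inter (convex_halfSpace_ge hLlin _)
  have hKclosed : ∀ n, IsClosed (Kn n) :=
    fun n => hclosed.inter (isClosed_le continuous_const hLcont)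
  have hKmono : ∀ {m n : ℕ}, m ≤ n → Kn n ⊆ Kn m := by
    intro m n hmn x hx
    refine ⟨hx.1, le_trans ?_ hx.2⟩
    have : (1 : ℝ) / (n + 1) ≤ 1 / (m + 1) := by
      apply one_div_le_one_div_of_le <;> [positivity; exact_mod_cast by omega]
    linarith
  set d : ℕ → ℝ := fun n => infDist 0 (Kn n) with hd
  have hdmono : Monotone d := fun m n hmn =>
    infDist_le_infDist_of_subset (hKmono hmn) (hKne n)
  have hdnn : ∀ n, 0 ≤ d n := fun n => infDist_nonneg
  have hdbdd : ∀ n, d n ≤ |R| := by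
    intro n
    obtain ⟨x, hx⟩ := hKne n
    calc d n ≤ dist 0 x := infDist_le_dist_of_mem hx
      _ = ‖x‖ := by simp
      _ ≤ R := hbdd x (hKsub n hx)
      _ ≤ |R| := le_abs_self R
  have hf : ∀ n : ℕ, ∃ x ∈ Kn n, dist 0 x < d n + 1 / (n + 1) := by
    intro n
    have h1 : (0:ℝ) < 1 / (n+1) := by positivity
    have h2 : d n < d n + 1 / (n+1) := by linarith
    exact (infDist_lt_iff (hKne n)).mp h2
  choose f hfK hfd using hf
  have hfnorm : ∀ n, ‖f n‖ < d n + 1 / (n + 1) := by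
    intro n; have := hfd n; rwa [dist_zero_left] at this
  set D : ℝ := ⨆ n, d n with hD
  have hDbdd : BddAbove (range d) := ⟨|R|, by rintro - ⟨n, rfl⟩; exact hdbdd n⟩
  have hdD : ∀ n, d n ≤ D := fun n => le_ciSup hDbdd n
  have hDtend : Tendsto d atTop (nhds D) := tendsto_atTop_ciSup hdmono hDbdd
  have hD0 : 0 ≤ D := le_trans (hdnn 0) (hdD 0)
  have hcauchy : CauchySeq f := by
    rw [Metric.cauchySeq_iff]
    intro ε hε
    set δ : ℝ := min 1 (ε ^ 2 / (12 * D + 5)) with hδdef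
    have hδpos : 0 < δ := lt_min one_pos (by positivity)
    have hδ1 : δ ≤ 1 := min_le_left _ _
    have hδε : δ * (12 * D + 4) < ε ^ 2 := by
      have h2 : δ ≤ ε ^ 2 / (12 * D + 5) := min_le_right _ _
      have h3 : (0:ℝ) < 12 * D + 5 := by linarith
      have h4 : δ * (12 * D + 5) ≤ ε ^ 2 := (le_div_iff₀ h3).mp h2
      nlinarith
    -- pick N
    obtain ⟨N1, hN1⟩ := (Metric.tendsto_atTop.mp hDtend) δ hδpos
    obtain ⟨N2, hN2⟩ := exists_nat_one_div_lt hδpos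
    set N := max N1 N2 with hN
    refine ⟨N, ?_⟩
    have key : ∀ m n, N ≤ n → n ≤ m → dist (f n) (f m) < ε := by
      intro m n hn hnm
      have hmN : N ≤ m := le_trans hn hnm
      have hdn : D - δ ≤ d n := by
        have := hN1 n (le_trans (le_max_left _ _) hn)
        rw [Real.dist_eq, abs_sub_lt_iff] at this
        linarith [this.2]
      have hdm : d m ≤ D := hdD m
      have hdnD : d n ≤ D := hdD n
      have hdnm : d n ≤ d m := hdmono hnm
      have hen : (1:ℝ) / (n + 1) ≤ δ := by
        have h5 : (1:ℝ) / (N2 + 1) < δ := hN2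
        have : (1:ℝ) / (n + 1) ≤ 1 / (N2 + 1) := by
          apply one_div_le_one_div_of_le
          · positivity
          · have : N2 ≤ n := le_trans (le_max_right _ _) hn
            exact_mod_cast by omega
        linarith
      have hem : (1:ℝ) / (m + 1) ≤ δ := by
        have h5 : (1:ℝ) / (N2 + 1) < δ := hN2
        have : (1:ℝ) / (m + 1) ≤ 1 / (N2 + 1) := by
          apply one_div_le_one_div_of_le
          · positivity
          · have : N2 ≤ m := le_trans (le_max_right _ _) hmN
            exact_mod_cast by omega
        linarith
      -- midpoint
      have hmid : (1/2 : ℝ) • f n + (1/2 : ℝ) • f m ∈ Kn n := by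
        apply hKconv n (hfK n) (hKmono hnm (hfK m)) (by norm_num) (by norm_num) (by norm_num)
      have hmidnorm : 2 * d n ≤ ‖f n + f m‖ := by
        have h6 : d n ≤ ‖(1/2 : ℝ) • f n + (1/2 : ℝ) • f m‖ := by
          have h8 : infDist (0:H) (Kn n) ≤ dist 0 ((1/2 : ℝ) • f n + (1/2 : ℝ) • f m) :=
            infDist_le_dist_of_mem hmid
          rwa [dist_zero_left] at h8
        have h7 : (1/2 : ℝ) • f n + (1/2 : ℝ) • f m = (1/2 : ℝ) • (f n + f m) := by
          rw [smul_add]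
        rw [h7, norm_smul] at h6
        simp at h6
        linarith
      have hpar := parallelogram_law_with_norm ℝ (f n) (f m)
      have hfn := hfnorm n
      have hfm := hfnorm m
      have hnn1 : (0:ℝ) ≤ ‖f n‖ := norm_nonneg _
      have hnn2 : (0:ℝ) ≤ ‖f m‖ := norm_nonneg _
      have hsq : ‖f n - f m‖ * ‖f n - f m‖ < ε ^ 2 := by
        nlinarith [hdnn n, hdnn m, norm_nonneg (f n + f m)]
      rw [dist_eq_norm]
      nlinarith [norm_nonneg (f n - f m)]
    intro m hm n hn
    rcases le_total n m with h | h
    · rw [dist_comm]; exact key m n hn h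
    · exact key n m hm h
  obtain ⟨x, hx⟩ := cauchySeq_tendsto_of_complete hcauchy
  have hxS : x ∈ S := hclosed.mem_of_tendsto hx (Eventually.of_forall fun n => hKsub n (hfK n))
  have hxM : M ≤ L x := by
    have hLx : ∀ n : ℕ, M - 1 / (n + 1) ≤ L x := by
      intro n
      refine ge_of_tendsto ((hLcont.tendsto x).comp hx) ?_
      filter_upwards [eventually_ge_atTop n] with k hk
      exact (hKmono hk (hfK k)).2
    by_contra hcon
    push_neg at hcon
    obtain ⟨n, hn⟩ := exists_nat_one_div_lt (sub_pos.mpr hcon)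
    have := hLx n
    linarith
  exact ⟨x, hxS, fun g hg => le_trans (le_csSup himbdd ⟨g, hg, rfl⟩) hxM⟩


section helpers

variable {T t : ℝ}

lemma restrict_Icc_eq (ht : t ∈ Icc 0 T) :
    (volume : Measure ℝ).restrict (Icc 0 t)
      = ((volume : Measure ℝ).restrict (Icc 0 T)).restrict (Icc 0 t) := by
  rw [Measure.restrict_restrict measurableSet_Icc,
    inter_eq_left.mpr (Icc_subset_Icc le_rfl ht.2)]

lemma ae_Icc_of_ae {P : ℝ → Prop} (ht : t ∈ Icc 0 T)
    (h : ∀ᵐ s ∂(volume : Measure ℝ).restrict (Icc 0 T), P s) :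
    ∀ᵐ s ∂(volume : Measure ℝ).restrict (Icc 0 t), P s := by
  rw [restrict_Icc_eq ht]; exact ae_restrict_of_ae h

lemma aesm_Icc_of_aesm {w : ℝ → ℝ} (ht : t ∈ Icc 0 T)
    (h : AEStronglyMeasurable w ((volume : Measure ℝ).restrict (Icc 0 T))) :
    AEStronglyMeasurable w ((volume : Measure ℝ).restrict (Icc 0 t)) := by
  rw [restrict_Icc_eq ht]; exact h.restrict

lemma memtop_bound {α : Type*} [MeasurableSpace α] {ν : Measure α} {f : α → ℝ}
    (hf : MemLp f ⊤ ν) : ∃ M : ℝ, 0 ≤ M ∧ ∀ᵐ x ∂ν, |f x| ≤ M := by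
  refine ⟨(eLpNormEssSup f ν).toReal, ENNReal.toReal_nonneg, ?_⟩
  have hlt : eLpNormEssSup f ν < ⊤ := by
    have := hf.2; rwa [eLpNorm_exponent_top] at this
  filter_upwards [ae_le_eLpNormEssSup (f := f) (μ := ν)] with x hx
  have : ((‖f x‖₊ : ℝ≥0∞)).toReal ≤ (eLpNormEssSup f ν).toReal :=
    ENNReal.toReal_mono hlt.ne hx
  simpa [Real.norm_eq_abs] using this

/-- Integrability of a product of two a.e. bounded a.e. strongly measurable functions on `Icc 0 t`. -/
lemma integrable_mul_of_bound (ht : t ∈ Icc 0 T) {k w : ℝ → ℝ} {M C : ℝ}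
    (hk : AEStronglyMeasurable k ((volume : Measure ℝ).restrict (Icc 0 T)))
    (hkb : ∀ᵐ s ∂(volume : Measure ℝ).restrict (Icc 0 T), |k s| ≤ M)
    (hw : AEStronglyMeasurable w ((volume : Measure ℝ).restrict (Icc 0 T)))
    (hwb : ∀ᵐ s ∂(volume : Measure ℝ).restrict (Icc 0 T), |w s| ≤ C) :
    Integrable (fun s => k s * w s) ((volume : Measure ℝ).restrict (Icc 0 t)) := by
  have hmeas : AEStronglyMeasurable (fun s => k s * w s)
      ((volume : Measure ℝ).restrict (Icc 0 t)) :=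
    (aesm_Icc_of_aesm ht hk).mul (aesm_Icc_of_aesm ht hw)
  have hb : ∀ᵐ s ∂(volume : Measure ℝ).restrict (Icc 0 t), ‖k s * w s‖ ≤ M * C := by
    filter_upwards [ae_Icc_of_ae ht hkb, ae_Icc_of_ae ht hwb] with s h1 h2
    rw [Real.norm_eq_abs, abs_mul]
    exact mul_le_mul h1 h2 (abs_nonneg _) (le_trans (abs_nonneg _) h1)
  exact (memLp_top_of_bound hmeas _ hb).integrable le_top

end helpers

section congr

variable {T : ℝ} {p q : ℕ} {c : ℝ → Fin p → ℝ} {B : ℝ → Fin p → Fin q → ℝ}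
  {K : ℝ → ℝ → Fin p → Fin q → ℝ} {ε : ℝ}

lemma clpFeasible_congr {z₁ z₂ : ℝ → Fin q → ℝ}
    (h : ∀ j, (fun t => z₁ t j) =ᵐ[(volume : Measure ℝ).restrict (Icc 0 T)] (fun t => z₂ t j))
    (hz : ClpFeasible T p q c B K ε z₁) : ClpFeasible T p q c B K ε z₂ := by
  obtain ⟨h1, h2, h3⟩ := hz
  have hall : ∀ᵐ t ∂(volume : Measure ℝ).restrict (Icc 0 T), ∀ j, z₁ t j = z₂ t j :=
    ae_all_iff.mpr h
  refine ⟨fun j => (h1 j).ae_eq (h j), ?_, ?_⟩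
  · filter_upwards [h2, hall] with t h2t heq j
    rw [← heq j]; exact h2t j
  · filter_upwards [h3, hall, ae_restrict_mem measurableSet_Icc] with t h3t heq ht i
    have hBeq : ∑ j, B t i j * z₂ t j = ∑ j, B t i j * z₁ t j :=
      Finset.sum_congr rfl fun j _ => by rw [heq j]
    have hint : (∫ s in Icc 0 t, ∑ j, K t s i j * z₂ s j)
        = ∫ s in Icc 0 t, ∑ j, K t s i j * z₁ s j := by
      refine integral_congr_ae ?_
      filter_upwards [ae_Icc_of_ae ht hall] with s hs
      exact Finset.sum_congr rfl fun j _ => by rw [hs j]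
    rw [hBeq, hint]
    exact h3t i

/-- Extract a uniform essential bound and a.e. section facts from `K ∈ L^∞` on the square. -/
lemma K_sections
    (hK : ∀ i j, MemLp (fun x : ℝ × ℝ => K x.1 x.2 i j) ⊤
      (((volume : Measure ℝ).restrict (Icc 0 T)).prod ((volume : Measure ℝ).restrict (Icc 0 T)))) :
    ∃ MK : ℝ, 0 ≤ MK ∧ ∀ᵐ t ∂(volume : Measure ℝ).restrict (Icc 0 T), ∀ i j,
      AEStronglyMeasurable (fun s => K t s i j) ((volume : Measure ℝ).restrict (Icc 0 T)) ∧
      ∀ᵐ s ∂(volume : Measure ℝ).restrict (Icc 0 T), |K t s i j| ≤ MK := by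
  choose M hM0 hMae using fun i j => memtop_bound (hK i j)
  refine ⟨∑ i, ∑ j, M i j, Finset.sum_nonneg fun i _ => Finset.sum_nonneg fun j _ => hM0 i j, ?_⟩
  rw [ae_all_iff]
  intro i
  rw [ae_all_iff]
  intro j
  have hMle : M i j ≤ ∑ i', ∑ j', M i' j' := by
    calc M i j ≤ ∑ j', M i j' :=
          Finset.single_le_sum (fun j' _ => hM0 i j') (Finset.mem_univ j)
      _ ≤ ∑ i', ∑ j', M i' j' :=
          Finset.single_le_sum (fun i' _ => Finset.sum_nonneg fun j' _ => hM0 i' j')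
            (Finset.mem_univ i)
  have hsec := (hK i j).1.prodMk_left
  have hbd := Measure.ae_ae_of_ae_prod (hMae i j)
  filter_upwards [hsec, hbd] with t h1 h2
  exact ⟨h1, by filter_upwards [h2] with s hs using le_trans hs hMle⟩

end congr

section space

variable {T : ℝ} {p q : ℕ} {c : ℝ → Fin p → ℝ} {B : ℝ → Fin p → Fin q → ℝ}
  {K : ℝ → ℝ → Fin p → Fin q → ℝ} {ε : ℝ}

instance piLp_completeSpace {ι : Type*} {pp : ℝ≥0∞} {β : ι → Type*}
    [∀ i, UniformSpace (β i)] [∀ i, CompleteSpace (β i)] : CompleteSpace (PiLp pp β) :=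
  inferInstance

/-- The ambient Hilbert space. -/
abbrev ClpH (T : ℝ) (q : ℕ) :=
  PiLp 2 (fun _ : Fin q => Lp ℝ 2 ((volume : Measure ℝ).restrict (Icc 0 T)))

noncomputable def toL2 (f : ℝ → ℝ)
    (hf : MemLp f ⊤ ((volume : Measure ℝ).restrict (Icc 0 T))) :
    Lp ℝ 2 ((volume : Measure ℝ).restrict (Icc 0 T)) :=
  (hf.mono_exponent le_top).toLp f

lemma toL2_coe (f : ℝ → ℝ) (hf : MemLp f ⊤ ((volume : Measure ℝ).restrict (Icc 0 T))) :
    (toL2 f hf : ℝ → ℝ) =ᵐ[(volume : Measure ℝ).restrict (Icc 0 T)] f :=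
  MemLp.coeFn_toLp _

noncomputable def toH (z : ℝ → Fin q → ℝ)
    (hz : ∀ j, MemLp (fun t => z t j) ⊤ ((volume : Measure ℝ).restrict (Icc 0 T))) :
    ClpH T q :=
  (WithLp.equiv 2 _).symm fun j => toL2 (fun t => z t j) (hz j)

lemma toH_coe (z : ℝ → Fin q → ℝ)
    (hz : ∀ j, MemLp (fun t => z t j) ⊤ ((volume : Measure ℝ).restrict (Icc 0 T))) (j : Fin q) :
    (toH z hz j : ℝ → ℝ) =ᵐ[(volume : Measure ℝ).restrict (Icc 0 T)] fun t => z t j := by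
  simp only [toH, WithLp.equiv_symm_apply, PiLp.toLp_apply]
  exact toL2_coe _ _

/-- The feasible set inside the Hilbert space. -/
def FeasSet (T : ℝ) (p q : ℕ) (c : ℝ → Fin p → ℝ) (B : ℝ → Fin p → Fin q → ℝ)
    (K : ℝ → ℝ → Fin p → Fin q → ℝ) (ε : ℝ) : Set (ClpH T q) :=
  {f | ClpFeasible T p q c B K ε fun t j => (f j : ℝ → ℝ) t}

lemma toH_mem_feasSet {z : ℝ → Fin q → ℝ} (hz : ClpFeasible T p q c B K ε z) :
    toH z hz.1 ∈ FeasSet T p q c B K ε :=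
  clpFeasible_congr (fun j => (toH_coe z hz.1 j).symm) hz

lemma feasSet_bounded {C : ℝ}
    (hbdd : ∀ z, ClpFeasible T p q c B K ε z →
      ∀ j, ∀ᵐ t ∂(volume.restrict (Icc 0 T)), |z t j| ≤ C) :
    ∀ f ∈ FeasSet T p q c B K ε,
      ‖f‖ ≤ Real.sqrt (q * ((measureUnivNNReal ((volume : Measure ℝ).restrict (Icc 0 T)) : ℝ)
        ^ ((2:ℝ≥0∞).toReal)⁻¹ * max C 0) ^ 2) := by
  intro f hf
  set R0 : ℝ := (measureUnivNNReal ((volume : Measure ℝ).restrict (Icc 0 T)) : ℝ)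
    ^ ((2:ℝ≥0∞).toReal)⁻¹ * max C 0 with hR0
  have hcoord : ∀ j, ‖f j‖ ≤ R0 := by
    intro j
    refine Lp.norm_le_of_ae_bound (le_max_right C 0) ?_
    filter_upwards [hbdd _ hf j] with t ht
    calc ‖(f j : ℝ → ℝ) t‖ = |(f j : ℝ → ℝ) t| := Real.norm_eq_abs _
      _ ≤ C := ht
      _ ≤ max C 0 := le_max_left _ _
  have hsq : ‖f‖ ^ 2 ≤ q * R0 ^ 2 := by
    rw [PiLp.norm_sq_eq_of_L2]
    calc (∑ j, ‖f j‖ ^ 2) ≤ ∑ _j : Fin q, R0 ^ 2 := by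
          refine Finset.sum_le_sum fun j _ => ?_
          have h0 : (0:ℝ) ≤ ‖f j‖ := norm_nonneg _
          nlinarith [hcoord j]
      _ = q * R0 ^ 2 := by simp [Finset.sum_const, Finset.card_univ, nsmul_eq_mul]
  have h1 : (0:ℝ) ≤ q * R0 ^ 2 := by positivity
  nlinarith [Real.sq_sqrt h1, Real.sqrt_nonneg (q * R0 ^ 2), norm_nonneg f]

end space

section innerConv

variable {T : ℝ} {p q : ℕ} {c : ℝ → Fin p → ℝ} {B : ℝ → Fin p → Fin q → ℝ}
  {K : ℝ → ℝ → Fin p → Fin q → ℝ} {ε : ℝ}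

lemma inner_eq_integral (A f : ClpH T q) :
    (inner ℝ A f : ℝ) = ∫ t in Icc 0 T, ∑ j, (A j : ℝ → ℝ) t * (f j : ℝ → ℝ) t := by
  have hint : ∀ j : Fin q, Integrable (fun t => (A j : ℝ → ℝ) t * (f j : ℝ → ℝ) t)
      ((volume : Measure ℝ).restrict (Icc 0 T)) := by
    intro j
    have h := L2.integrable_inner (𝕜 := ℝ) (A j) (f j)
    simpa [RCLike.inner_apply, starRingEnd_apply, star_trivial, mul_comm] using h
  calc (inner ℝ A f : ℝ) = ∑ j, (inner ℝ (A j) (f j) : ℝ) := PiLp.inner_apply A f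
    _ = ∑ j, ∫ t, (A j : ℝ → ℝ) t * (f j : ℝ → ℝ) t ∂((volume : Measure ℝ).restrict (Icc 0 T)) := by
        refine Finset.sum_congr rfl fun j _ => ?_
        rw [L2.inner_def]
        refine integral_congr_ae (Eventually.of_forall fun t => ?_)
        simp [RCLike.inner_apply, starRingEnd_apply, star_trivial, mul_comm]
    _ = ∫ t, ∑ j, (A j : ℝ → ℝ) t * (f j : ℝ → ℝ) t
          ∂((volume : Measure ℝ).restrict (Icc 0 T)) :=
        (integral_finset_sum _ fun j _ => hint j).symm

lemma obj_eq_inner (A f : ClpH T q) (a : ℝ → Fin q → ℝ) (z : ℝ → Fin q → ℝ)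
    (haeq : ∀ j, (A j : ℝ → ℝ) =ᵐ[(volume : Measure ℝ).restrict (Icc 0 T)] fun t => a t j)
    (hzeq : ∀ j, (f j : ℝ → ℝ) =ᵐ[(volume : Measure ℝ).restrict (Icc 0 T)] fun t => z t j) :
    ∫ t in Icc 0 T, ∑ j, a t j * z t j = (inner ℝ A f : ℝ) := by
  rw [inner_eq_integral]
  refine integral_congr_ae ?_
  filter_upwards [ae_all_iff.mpr haeq, ae_all_iff.mpr hzeq] with t h1 h2
  exact Finset.sum_congr rfl fun j _ => by rw [h1 j, h2 j]

lemma feasSet_convex {C MK : ℝ}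
    (hbdd : ∀ z, ClpFeasible T p q c B K ε z →
      ∀ j, ∀ᵐ t ∂(volume.restrict (Icc 0 T)), |z t j| ≤ C)
    (hKsec : ∀ᵐ t ∂(volume : Measure ℝ).restrict (Icc 0 T), ∀ i j,
      AEStronglyMeasurable (fun s => K t s i j) ((volume : Measure ℝ).restrict (Icc 0 T)) ∧
      ∀ᵐ s ∂(volume : Measure ℝ).restrict (Icc 0 T), |K t s i j| ≤ MK) :
    Convex ℝ (FeasSet T p q c B K ε) := by
  intro f hf g hg α β hα hβ hab
  have hf' : ClpFeasible T p q c B K ε fun t j => (f j : ℝ → ℝ) t := hf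
  have hg' : ClpFeasible T p q c B K ε fun t j => (g j : ℝ → ℝ) t := hg
  have hcoe : ∀ j, (((α • f + β • g) j : ℝ → ℝ))
      =ᵐ[(volume : Measure ℝ).restrict (Icc 0 T)]
      fun t => α * (f j : ℝ → ℝ) t + β * (g j : ℝ → ℝ) t := by
    intro j
    have h1 : (α • f + β • g) j = α • f j + β • g j := by
      simp [PiLp.add_apply, PiLp.smul_apply]
    rw [h1]
    filter_upwards [Lp.coeFn_add (α • f j) (β • g j), Lp.coeFn_smul α (f j),
      Lp.coeFn_smul β (g j)] with t e1 e2 e3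
    simp only [e1, Pi.add_apply, e2, e3, Pi.smul_apply, smul_eq_mul]
  refine clpFeasible_congr (fun j => (hcoe j).symm) ?_
  refine ⟨fun j => ((hf'.1 j).const_mul α).add ((hg'.1 j).const_mul β), ?_, ?_⟩
  · filter_upwards [hf'.2.1, hg'.2.1] with t h1 h2 j
    exact add_nonneg (mul_nonneg hα (h1 j)) (mul_nonneg hβ (h2 j))
  · filter_upwards [hf'.2.2, hg'.2.2, hKsec, ae_restrict_mem measurableSet_Icc]
      with t hft hgt hKt ht i
    have hu : Integrable (fun s => ∑ j, K t s i j * (f j : ℝ → ℝ) s)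
        ((volume : Measure ℝ).restrict (Icc 0 t)) :=
      integrable_finset_sum _ fun j _ => integrable_mul_of_bound ht (hKt i j).1 (hKt i j).2
        (Lp.aestronglyMeasurable (f j)) (hbdd _ hf' j)
    have hv : Integrable (fun s => ∑ j, K t s i j * (g j : ℝ → ℝ) s)
        ((volume : Measure ℝ).restrict (Icc 0 t)) :=
      integrable_finset_sum _ fun j _ => integrable_mul_of_bound ht (hKt i j).1 (hKt i j).2
        (Lp.aestronglyMeasurable (g j)) (hbdd _ hg' j)
    have hsum : ∀ (D : Fin q → ℝ) (x y : Fin q → ℝ),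
        ∑ j, D j * (α * x j + β * y j) = α * (∑ j, D j * x j) + β * (∑ j, D j * y j) := by
      intro D x y
      rw [Finset.mul_sum, Finset.mul_sum, ← Finset.sum_add_distrib]
      exact Finset.sum_congr rfl fun j _ => by ring
    have hI : (∫ s in Icc 0 t, ∑ j, K t s i j * (α * (f j : ℝ → ℝ) s + β * (g j : ℝ → ℝ) s))
        = α * (∫ s in Icc 0 t, ∑ j, K t s i j * (f j : ℝ → ℝ) s)
          + β * (∫ s in Icc 0 t, ∑ j, K t s i j * (g j : ℝ → ℝ) s) := by
      rw [show (fun s => ∑ j, K t s i j * (α * (f j : ℝ → ℝ) s + β * (g j : ℝ → ℝ) s))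
          = fun s => α * (∑ j, K t s i j * (f j : ℝ → ℝ) s)
            + β * (∑ j, K t s i j * (g j : ℝ → ℝ) s) from
        funext fun s => hsum _ _ _]
      rw [integral_add (hu.const_mul α) (hv.const_mul β), integral_const_mul, integral_const_mul]
    rw [hsum (fun j => B t i j) _ _, hI]
    calc α * (∑ j, B t i j * (f j : ℝ → ℝ) t) + β * (∑ j, B t i j * (g j : ℝ → ℝ) t)
        ≤ α * (c t i + ε + ∫ s in Icc 0 t, ∑ j, K t s i j * (f j : ℝ → ℝ) s)
          + β * (c t i + ε + ∫ s in Icc 0 t, ∑ j, K t s i j * (g j : ℝ → ℝ) s) :=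
        add_le_add (mul_le_mul_of_nonneg_left (hft i) hα) (mul_le_mul_of_nonneg_left (hgt i) hβ)
      _ = c t i + ε + (α * (∫ s in Icc 0 t, ∑ j, K t s i j * (f j : ℝ → ℝ) s)
          + β * (∫ s in Icc 0 t, ∑ j, K t s i j * (g j : ℝ → ℝ) s)) := by
        linear_combination (c t i + ε) * hab

end innerConv

section closed

variable {T : ℝ} {p q : ℕ} {c : ℝ → Fin p → ℝ} {B : ℝ → Fin p → Fin q → ℝ}
  {K : ℝ → ℝ → Fin p → Fin q → ℝ} {ε : ℝ}

set_option synthInstance.maxHeartbeats 1000000 in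
set_option maxHeartbeats 2000000 in
lemma feasSet_closed {C MK : ℝ}
    (hbdd : ∀ z, ClpFeasible T p q c B K ε z →
      ∀ j, ∀ᵐ t ∂(volume.restrict (Icc 0 T)), |z t j| ≤ C)
    (hKsec : ∀ᵐ t ∂(volume : Measure ℝ).restrict (Icc 0 T), ∀ i j,
      AEStronglyMeasurable (fun s => K t s i j) ((volume : Measure ℝ).restrict (Icc 0 T)) ∧
      ∀ᵐ s ∂(volume : Measure ℝ).restrict (Icc 0 T), |K t s i j| ≤ MK) :
    IsClosed (FeasSet T p q c B K ε) := by
  refine IsSeqClosed.isClosed fun F f hF hlim => ?_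
  have hcoord : ∀ j, Tendsto (fun n => F n j) atTop (nhds (f j)) := by
    intro j
    rw [tendsto_iff_dist_tendsto_zero]
    refine squeeze_zero (fun n => dist_nonneg) (fun n => ?_)
      (tendsto_iff_dist_tendsto_zero.mp hlim)
    have h1 : F n j - f j = (F n - f) j := rfl
    rw [dist_eq_norm, dist_eq_norm, h1]
    have h2 := PiLp.norm_sq_eq_of_L2 (fun _ : Fin q => Lp ℝ 2
      ((volume : Measure ℝ).restrict (Icc 0 T))) (F n - f)
    have h3 : ‖(F n - f) j‖ ^ 2 ≤ ∑ i, ‖(F n - f) i‖ ^ 2 :=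
      Finset.single_le_sum (f := fun i => ‖(F n - f) i‖ ^ 2) (fun i _ => sq_nonneg _)
        (Finset.mem_univ j)
    nlinarith [norm_nonneg (F n - f), norm_nonneg ((F n - f) j)]
  have hmeasTend : TendstoInMeasure ((volume : Measure ℝ).restrict (Icc 0 T))
      (fun n t (j : Fin q) => (F n j : ℝ → ℝ) t) atTop (fun t j => (f j : ℝ → ℝ) t) := by
    intro δ hδ
    have hcoordM : ∀ j : Fin q, Tendsto (fun n =>
        ((volume : Measure ℝ).restrict (Icc 0 T))
          {x | δ ≤ edist ((F n j : ℝ → ℝ) x) ((f j : ℝ → ℝ) x)}) atTop (nhds 0) :=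
      fun j => tendstoInMeasure_of_tendsto_Lp (hcoord j) δ hδ
    have hsum : Tendsto (fun n => ∑ j : Fin q,
        ((volume : Measure ℝ).restrict (Icc 0 T))
          {x | δ ≤ edist ((F n j : ℝ → ℝ) x) ((f j : ℝ → ℝ) x)}) atTop (nhds 0) := by
      have := tendsto_finset_sum (Finset.univ : Finset (Fin q)) fun j _ => hcoordM j
      simpa using this
    refine tendsto_of_tendsto_of_tendsto_of_le_of_le tendsto_const_nhds hsum
      (fun n => by simp) fun n => ?_
    refine le_trans (measure_mono ?_) (measure_biUnion_finset_le _ _)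
    intro x hx
    simp only [mem_setOf_eq] at hx
    by_contra hcon
    simp only [Finset.mem_univ, iUnion_true, mem_iUnion, mem_setOf_eq, not_exists, not_le] at hcon
    have : edist (fun j => (F n j : ℝ → ℝ) x) (fun j => (f j : ℝ → ℝ) x) < δ := by
      rw [edist_pi_def]; exact (Finset.sup_lt_iff hδ).mpr fun j _ => hcon j
    exact absurd hx (not_le.mpr this)
  obtain ⟨ns, hns, hae⟩ := hmeasTend.exists_seq_tendsto_ae
  have hconv : ∀ᵐ t ∂(volume : Measure ℝ).restrict (Icc 0 T), ∀ j,
      Tendsto (fun k => (F (ns k) j : ℝ → ℝ) t) atTop (nhds ((f j : ℝ → ℝ) t)) := by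
    filter_upwards [hae] with t h j
    exact tendsto_pi_nhds.mp h j
  have hFeas : ∀ n, ClpFeasible T p q c B K ε fun t j => (F n j : ℝ → ℝ) t := hF
  have hCb : ∀ᵐ t ∂(volume : Measure ℝ).restrict (Icc 0 T), ∀ (k : ℕ) j,
      |(F (ns k) j : ℝ → ℝ) t| ≤ C :=
    ae_all_iff.mpr fun k => ae_all_iff.mpr fun j => hbdd _ (hFeas (ns k)) j
  have hnn : ∀ᵐ t ∂(volume : Measure ℝ).restrict (Icc 0 T), ∀ (k : ℕ) j,
      0 ≤ (F (ns k) j : ℝ → ℝ) t :=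
    ae_all_iff.mpr fun k => (hFeas (ns k)).2.1
  have hcons : ∀ᵐ t ∂(volume : Measure ℝ).restrict (Icc 0 T), ∀ (k : ℕ) i,
      ∑ j, B t i j * (F (ns k) j : ℝ → ℝ) t
        ≤ c t i + ε + ∫ s in Icc 0 t, ∑ j, K t s i j * (F (ns k) j : ℝ → ℝ) s :=
    ae_all_iff.mpr fun k => (hFeas (ns k)).2.2
  refine ⟨fun j => ?_, ?_, ?_⟩
  · refine memLp_top_of_bound (Lp.aestronglyMeasurable (f j)) C ?_
    filter_upwards [hconv, hCb] with t h1 h2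
    rw [Real.norm_eq_abs]
    exact le_of_tendsto' ((continuous_abs.tendsto _).comp (h1 j)) fun k => h2 k j
  · filter_upwards [hconv, hnn] with t h1 h2 j
    exact ge_of_tendsto' (h1 j) fun k => h2 k j
  · filter_upwards [hconv, hcons, hKsec, ae_restrict_mem measurableSet_Icc]
      with t h1 hconsT hKt ht i
    have hKb : ∀ᵐ s ∂(volume : Measure ℝ).restrict (Icc 0 T), ∀ i' j',
        |K t s i' j'| ≤ MK :=
      ae_all_iff.mpr fun i' => ae_all_iff.mpr fun j' => (hKt i' j').2
    have hFmeas : ∀ k, AEStronglyMeasurable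
        (fun s => ∑ j, K t s i j * (F (ns k) j : ℝ → ℝ) s)
        ((volume : Measure ℝ).restrict (Icc 0 t)) := fun k =>
      Finset.aestronglyMeasurable_fun_sum _ fun j _ =>
        (aesm_Icc_of_aesm ht (hKt i j).1).mul
          (aesm_Icc_of_aesm ht (Lp.aestronglyMeasurable (F (ns k) j)))
    have hbound : ∀ k, ∀ᵐ s ∂(volume : Measure ℝ).restrict (Icc 0 t),
        ‖∑ j, K t s i j * (F (ns k) j : ℝ → ℝ) s‖ ≤ (q : ℝ) * (MK * C) := by
      intro k
      filter_upwards [ae_Icc_of_ae ht hKb, ae_Icc_of_ae ht hCb] with s hs1 hs2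
      rw [Real.norm_eq_abs]
      calc |∑ j, K t s i j * (F (ns k) j : ℝ → ℝ) s|
          ≤ ∑ j, |K t s i j * (F (ns k) j : ℝ → ℝ) s| := Finset.abs_sum_le_sum_abs _ _
        _ ≤ ∑ _j : Fin q, MK * C := by
            refine Finset.sum_le_sum fun j _ => ?_
            rw [abs_mul]
            exact mul_le_mul (hs1 i j) (hs2 k j) (abs_nonneg _)
              (le_trans (abs_nonneg _) (hs1 i j))
        _ = (q : ℝ) * (MK * C) := by
            simp [Finset.sum_const, Finset.card_univ, nsmul_eq_mul]
    have hlimit : ∀ᵐ s ∂(volume : Measure ℝ).restrict (Icc 0 t),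
        Tendsto (fun k => ∑ j, K t s i j * (F (ns k) j : ℝ → ℝ) s) atTop
          (nhds (∑ j, K t s i j * (f j : ℝ → ℝ) s)) := by
      filter_upwards [ae_Icc_of_ae ht hconv] with s hs
      exact tendsto_finset_sum _ fun j _ => (hs j).const_mul _
    have hItend : Tendsto (fun k => ∫ s in Icc 0 t, ∑ j, K t s i j * (F (ns k) j : ℝ → ℝ) s)
        atTop (nhds (∫ s in Icc 0 t, ∑ j, K t s i j * (f j : ℝ → ℝ) s)) :=
      tendsto_integral_of_dominated_convergence _ hFmeas (integrable_const _) hbound hlimit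
    have hLtend : Tendsto (fun k => ∑ j, B t i j * (F (ns k) j : ℝ → ℝ) t) atTop
        (nhds (∑ j, B t i j * (f j : ℝ → ℝ) t)) :=
      tendsto_finset_sum _ fun j _ => (h1 j).const_mul _
    exact le_of_tendsto_of_tendsto' hLtend (tendsto_const_nhds.add hItend) fun k => hconsT k i

end closed

set_option synthInstance.maxHeartbeats 1000000 in
set_option maxHeartbeats 2000000 in
/-- Theorem 3.1(i): existence of optimal solutions of (CLP_ε). -/
theorem clp_eps_optimal_exists (T : ℝ) (hT : 0 < T) (p q : ℕ)
    (a : ℝ → Fin q → ℝ) (c : ℝ → Fin p → ℝ)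
    (B : ℝ → Fin p → Fin q → ℝ) (K : ℝ → ℝ → Fin p → Fin q → ℝ)
    (ε : ℝ) (hε : 0 ≤ ε)
    (ha : ∀ j, MemLp (fun t => a t j) ⊤ (volume.restrict (Icc 0 T)))
    (hc : ∀ i, MemLp (fun t => c t i) ⊤ (volume.restrict (Icc 0 T)))
    (hB : ∀ i j, MemLp (fun t => B t i j) ⊤ (volume.restrict (Icc 0 T)))
    (hBnn : ∀ᵐ t ∂(volume.restrict (Icc 0 T)), ∀ i j, 0 ≤ B t i j)
    (hK : ∀ i j, MemLp (fun x : ℝ × ℝ => K x.1 x.2 i j) ⊤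
      ((volume.restrict (Icc 0 T)).prod (volume.restrict (Icc 0 T))))
    (hfeas : ∃ z, ClpFeasible T p q c B K ε z)
    (hbdd : ∃ C : ℝ, 0 < C ∧ ∀ z, ClpFeasible T p q c B K ε z →
      ∀ j, ∀ᵐ t ∂(volume.restrict (Icc 0 T)), |z t j| ≤ C) :
    ∃ zbar : ℝ → Fin q → ℝ, ClpFeasible T p q c B K ε zbar ∧
      (∀ t ∈ Icc (0 : ℝ) T, ∀ j, 0 ≤ zbar t j) ∧
      (∀ z, ClpFeasible T p q c B K ε z →
        ∫ t in Icc 0 T, ∑ j, a t j * z t j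
          ≤ ∫ t in Icc 0 T, ∑ j, a t j * zbar t j) := by
  obtain ⟨C, hC0, hbddC⟩ := hbdd
  obtain ⟨z0, hz0⟩ := hfeas
  obtain ⟨MK, hMK0, hKsec⟩ := K_sections hK
  have hSne : (FeasSet T p q c B K ε).Nonempty := ⟨toH z0 hz0.1, toH_mem_feasSet hz0⟩
  have hSconv : Convex ℝ (FeasSet T p q c B K ε) := feasSet_convex hbddC hKsec
  have hSclosed : IsClosed (FeasSet T p q c B K ε) := feasSet_closed hbddC hKsec
  have hSbdd := feasSet_bounded hbddC
  obtain ⟨fstar, hfstarS, hfopt⟩ :=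
    exists_isMaxOn_inner (toH a ha) hSne hSconv hSclosed hSbdd
  have hzbar0 : ClpFeasible T p q c B K ε fun t j => (fstar j : ℝ → ℝ) t := hfstarS
  refine ⟨fun t j => max ((fstar j : ℝ → ℝ) t) 0, ?_, fun t _ j => le_max_right _ _, ?_⟩
  · refine clpFeasible_congr ?_ hzbar0
    intro j
    filter_upwards [hzbar0.2.1] with t hnn
    exact (max_eq_left (hnn j)).symm
  · intro z hz
    have h1 : ∫ t in Icc 0 T, ∑ j, a t j * z t j = (inner ℝ (toH a ha) (toH z hz.1) : ℝ) :=
      obj_eq_inner _ _ a z (toH_coe a ha) (toH_coe z hz.1)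
    have h2 : ∫ t in Icc 0 T, ∑ j, a t j * max ((fstar j : ℝ → ℝ) t) 0
        = (inner ℝ (toH a ha) fstar : ℝ) := by
      refine obj_eq_inner _ _ a _ (toH_coe a ha) ?_
      intro j
      filter_upwards [hzbar0.2.1] with t hnn
      exact (max_eq_left (hnn j)).symm
    rw [h1, h2]
    exact hfopt _ (toH_mem_feasSet hz)
end

section
/- Suppose K(s,t) ≥ 0 a.e. in [0,T]², Σ_{i=1}^p B_{ij}(t) > 0 a.e. in [0,T] for each j, and there is σ > 0 such that for a.e. t, B_{ij}(t) ≠ 0 implies B_{ij}(t) ≥ σ. Let w be a feasible solution of (DCLP_ε) and define ŵ_i(t) = min{ w_i(t), ρ_ε(t) }, where ρ_ε(t) = ((τ−ε)/σ)exp(ν(T−t)/σ). Then ŵ is also a feasible solution of (DCLP_ε), with ŵ(t) ≤ w(t) and ŵ(t) ≤ ρ_ε(t)·𝟙 for all t ∈ [0,T]. -/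
open MeasureTheory Set
open scoped ENNReal NNReal

lemma rho_integral {T t σ ν c : ℝ} (hσ : 0 < σ) (hν : 0 < ν) (ht : t ≤ T) :
    ∫ s in Icc t T, ν * (c / σ * Real.exp (ν * (T - s) / σ)) =
      σ * (c / σ * Real.exp (ν * (T - t) / σ)) - c := by
  rw [MeasureTheory.integral_Icc_eq_integral_Ioc, ← intervalIntegral.integral_of_le ht]
  have hF : ∀ s ∈ uIcc t T, HasDerivAt (fun u => -c * Real.exp (ν * (T - u) / σ))
      (ν * (c / σ * Real.exp (ν * (T - s) / σ))) s := by
    intro s _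
    have h1 : HasDerivAt (fun u : ℝ => ν * (T - u) / σ) (-(ν / σ)) s := by
      have h := (((hasDerivAt_id s).const_sub T).const_mul ν).div_const σ
      refine h.congr_deriv ?_
      ring
    have h2 := (h1.exp).const_mul (-c)
    refine h2.congr_deriv ?_
    field_simp
  rw [intervalIntegral.integral_eq_sub_of_hasDerivAt hF
    (Continuous.intervalIntegrable (by fun_prop) _ _)]
  have hTT : ν * (T - T) / σ = 0 := by ring
  rw [hTT, Real.exp_zero]
  field_simp
  ring

/-- Lemma 3.4: truncating a dual feasible solution by ρ_ε preserves feasibility. -/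
theorem dual_truncation_feasible (T : ℝ) (hT : 0 < T) (p q : ℕ)
    (a : ℝ → Fin q → ℝ) (B : ℝ → Fin p → Fin q → ℝ)
    (K : ℝ → ℝ → Fin p → Fin q → ℝ)
    (ε σ τ ν : ℝ) (hσ : 0 < σ) (hν : 0 < ν) (hε : 0 ≤ ε) (hτ : ε ≤ τ)
    (hτa : ∀ j, ∀ᵐ t ∂(volume.restrict (Icc 0 T)), |a t j| ≤ τ)
    (hKν : ∀ j, ∀ᵐ x ∂((volume.restrict (Icc 0 T)).prod (volume.restrict (Icc 0 T))),
      ∑ i, |K x.1 x.2 i j| ≤ ν)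
    (hK : ∀ i j, MemLp (fun x : ℝ × ℝ => K x.1 x.2 i j) ⊤
      ((volume.restrict (Icc 0 T)).prod (volume.restrict (Icc 0 T))))
    (hKnn : ∀ᵐ x ∂((volume.restrict (Icc 0 T)).prod (volume.restrict (Icc 0 T))),
      ∀ i j, 0 ≤ K x.1 x.2 i j)
    (hBpos : ∀ j, ∀ᵐ t ∂(volume.restrict (Icc 0 T)), 0 < ∑ i, B t i j)
    (hBσ : ∀ᵐ t ∂(volume.restrict (Icc 0 T)), ∀ i j, B t i j ≠ 0 → σ ≤ B t i j)
    (hBmeas : ∀ i j, MemLp (fun t => B t i j) ⊤ (volume.restrict (Icc 0 T)))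
    (w : ℝ → Fin p → ℝ)
    (hw : ∀ i, MemLp (fun t => w t i) ⊤ (volume.restrict (Icc 0 T)))
    (hwnn : ∀ᵐ t ∂(volume.restrict (Icc 0 T)), ∀ i, 0 ≤ w t i)
    (hwfeas : ∀ᵐ t ∂(volume.restrict (Icc 0 T)), ∀ j,
      a t j - ε + ∫ s in Icc t T, ∑ i, K s t i j * w s i
        ≤ ∑ i, B t i j * w t i) :
    -- ŵ_i(t) = min (w_i(t)) (ρ_ε(t)) is feasible for (DCLP_ε) and dominated by w and ρ_ε
    (∀ᵐ t ∂(volume.restrict (Icc 0 T)), ∀ i,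
      0 ≤ min (w t i) (((τ - ε) / σ) * Real.exp (ν * (T - t) / σ))) ∧
    (∀ᵐ t ∂(volume.restrict (Icc 0 T)), ∀ j,
      a t j - ε + ∫ s in Icc t T,
          ∑ i, K s t i j * min (w s i) (((τ - ε) / σ) * Real.exp (ν * (T - s) / σ))
        ≤ ∑ i, B t i j * min (w t i) (((τ - ε) / σ) * Real.exp (ν * (T - t) / σ))) ∧
    (∀ t : ℝ, ∀ i, min (w t i) (((τ - ε) / σ) * Real.exp (ν * (T - t) / σ)) ≤ w t i) ∧
    (∀ t : ℝ, ∀ i, min (w t i) (((τ - ε) / σ) * Real.exp (ν * (T - t) / σ))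
        ≤ ((τ - ε) / σ) * Real.exp (ν * (T - t) / σ)) := by
  have hρnn : ∀ u : ℝ, 0 ≤ ((τ - ε) / σ) * Real.exp (ν * (T - u) / σ) := fun u =>
    mul_nonneg (div_nonneg (by linarith) hσ.le) (Real.exp_pos _).le
  set μ0 : Measure ℝ := volume.restrict (Icc 0 T) with hμ0
  -- essential sup bounds for w
  have hwbd : ∀ i, ∃ C : ℝ, ∀ᵐ s ∂μ0, |w s i| ≤ C := by
    intro i
    refine ⟨(eLpNormEssSup (fun t => w t i) μ0).toReal, ?_⟩
    have hfin : eLpNormEssSup (fun t => w t i) μ0 ≠ ⊤ := by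
      have := (hw i).2
      rw [eLpNorm_exponent_top] at this
      exact this.ne
    filter_upwards [ae_le_eLpNormEssSup (f := fun t => w t i) (μ := μ0)] with s hs
    have h2 : ((‖w s i‖₊ : ℝ≥0∞)).toReal ≤ (eLpNormEssSup (fun t => w t i) μ0).toReal :=
      ENNReal.toReal_mono hfin hs
    simpa [abs_nonneg] using h2
  choose C hC using hwbd
  -- swap a.e. facts from the product measure
  have swap_ae : ∀ {P : ℝ → ℝ → Prop}, (∀ᵐ x ∂μ0.prod μ0, P x.1 x.2) →
      ∀ᵐ t ∂μ0, ∀ᵐ s ∂μ0, P s t := by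
    intro P h
    have h2 := (Measure.measurePreserving_swap (μ := μ0) (ν := μ0)).quasiMeasurePreserving.ae h
    exact Measure.ae_ae_of_ae_prod h2
  have hKν' : ∀ᵐ t ∂μ0, ∀ j, ∀ᵐ s ∂μ0, ∑ i, |K s t i j| ≤ ν :=
    ae_all_iff.mpr fun j => swap_ae (hKν j)
  have hKnn' : ∀ᵐ t ∂μ0, ∀ᵐ s ∂μ0, ∀ i j, 0 ≤ K s t i j := swap_ae hKnn
  have hKmeas : ∀ᵐ t ∂μ0, ∀ i j, AEStronglyMeasurable (fun s => K s t i j) μ0 := by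
    rw [ae_all_iff]; intro i; rw [ae_all_iff]; intro j
    have h1 := (hK i j).1.prod_swap
    exact h1.prodMk_left
  have hτa' : ∀ᵐ t ∂μ0, ∀ j, |a t j| ≤ τ := ae_all_iff.mpr hτa
  have hwC : ∀ᵐ s ∂μ0, ∀ i, |w s i| ≤ C i := ae_all_iff.mpr hC
  refine ⟨?_, ?_, fun t i => min_le_left _ _, fun t i => min_le_right _ _⟩
  · filter_upwards [hwnn] with t ht i
    exact le_min (ht i) (hρnn t)
  · filter_upwards [hwfeas, hτa', hBσ, hwnn, hKν', hKnn', hKmeas,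
      ae_restrict_mem measurableSet_Icc] with t hfeas hat hBt hwt hKνt hKnnt hKmt htmem
    intro j
    obtain ⟨ht0, htT⟩ := htmem
    have hsub : Icc t T ⊆ Icc 0 T := Icc_subset_Icc ht0 le_rfl
    have hμeq : μ0.restrict (Icc t T) = volume.restrict (Icc t T) := by
      rw [hμ0, Measure.restrict_restrict measurableSet_Icc, inter_eq_left.mpr hsub]
    have transfer : ∀ {P : ℝ → Prop}, (∀ᵐ s ∂μ0, P s) →
        ∀ᵐ s ∂(volume.restrict (Icc t T)), P s := fun h => hμeq ▸ ae_restrict_of_ae h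
    have transferM : ∀ {f : ℝ → ℝ}, AEStronglyMeasurable f μ0 →
        AEStronglyMeasurable f (volume.restrict (Icc t T)) := fun h => hμeq ▸ h.restrict
    -- integrability of all the integrands on Icc t T
    have hmeas_w : ∀ i, AEStronglyMeasurable (fun s => K s t i j * w s i)
        (volume.restrict (Icc t T)) := fun i =>
      (transferM (hKmt i j)).mul (transferM (hw i).1)
    have hmeas_min : ∀ i, AEStronglyMeasurable
        (fun s => K s t i j * min (w s i) (((τ - ε) / σ) * Real.exp (ν * (T - s) / σ)))
        (volume.restrict (Icc t T)) := by
      intro i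
      refine (transferM (hKmt i j)).mul ?_
      have hwm : AEStronglyMeasurable (fun s => w s i) (volume.restrict (Icc t T)) :=
        transferM (hw i).1
      have hρm : AEStronglyMeasurable
          (fun s : ℝ => ((τ - ε) / σ) * Real.exp (ν * (T - s) / σ))
          (volume.restrict (Icc t T)) := (Continuous.aestronglyMeasurable (by fun_prop))
      exact (aestronglyMeasurable_iff_aemeasurable.mpr
        ((hwm.aemeasurable).min (hρm.aemeasurable)))
    have hKbound : ∀ᵐ s ∂(volume.restrict (Icc t T)), ∀ i, |K s t i j| ≤ ν := by
      filter_upwards [transfer (hKνt j)] with s hs i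
      calc |K s t i j| ≤ ∑ i', |K s t i' j| :=
            Finset.single_le_sum (f := fun i' => |K s t i' j|) (fun i' _ => abs_nonneg _) (Finset.mem_univ i)
        _ ≤ ν := hs
    have hint_w : ∀ i, Integrable (fun s => K s t i j * w s i)
        (volume.restrict (Icc t T)) := by
      intro i
      refine Integrable.mono' (integrable_const (ν * C i)) (hmeas_w i) ?_
      filter_upwards [hKbound, transfer hwC] with s hs hws
      rw [Real.norm_eq_abs, abs_mul]
      exact mul_le_mul (hs i) (hws i) (abs_nonneg _) hν.le
    have hint_min : ∀ i, Integrable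
        (fun s => K s t i j * min (w s i) (((τ - ε) / σ) * Real.exp (ν * (T - s) / σ)))
        (volume.restrict (Icc t T)) := by
      intro i
      refine Integrable.mono' (integrable_const (ν * C i)) (hmeas_min i) ?_
      filter_upwards [hKbound, transfer hwC, transfer hwnn] with s hs hws hwsn
      rw [Real.norm_eq_abs, abs_mul]
      refine mul_le_mul (hs i) ?_ (abs_nonneg _) hν.le
      rw [abs_of_nonneg (le_min (hwsn i) (hρnn s))]
      exact le_trans (min_le_left _ _) (le_trans (le_abs_self _) (hws i))
    have hint_sum_w : Integrable (fun s => ∑ i, K s t i j * w s i)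
        (volume.restrict (Icc t T)) := integrable_finset_sum _ (fun i _ => hint_w i)
    have hint_sum_min : Integrable
        (fun s => ∑ i, K s t i j * min (w s i) (((τ - ε) / σ) * Real.exp (ν * (T - s) / σ)))
        (volume.restrict (Icc t T)) := integrable_finset_sum _ (fun i _ => hint_min i)
    have hint_rho : Integrable
        (fun s : ℝ => ν * ((τ - ε) / σ * Real.exp (ν * (T - s) / σ)))
        (volume.restrict (Icc t T)) :=
      (Continuous.integrableOn_Icc (by fun_prop))
    -- comparison 1 : ∑ K ŵ ≤ ∑ K w a.e.
    have hcmp1 : ∀ᵐ s ∂(volume.restrict (Icc t T)),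
        (∑ i, K s t i j * min (w s i) (((τ - ε) / σ) * Real.exp (ν * (T - s) / σ)))
          ≤ ∑ i, K s t i j * w s i := by
      filter_upwards [transfer hKnnt] with s hs
      exact Finset.sum_le_sum fun i _ =>
        mul_le_mul_of_nonneg_left (min_le_left _ _) (hs i j)
    -- comparison 2 : ∑ K ŵ ≤ ν ρ a.e.
    have hcmp2 : ∀ᵐ s ∂(volume.restrict (Icc t T)),
        (∑ i, K s t i j * min (w s i) (((τ - ε) / σ) * Real.exp (ν * (T - s) / σ)))
          ≤ ν * ((τ - ε) / σ * Real.exp (ν * (T - s) / σ)) := by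
      filter_upwards [transfer hKnnt, transfer (hKνt j)] with s hs hsν
      calc (∑ i, K s t i j * min (w s i) (((τ - ε) / σ) * Real.exp (ν * (T - s) / σ)))
          ≤ ∑ i, K s t i j * (((τ - ε) / σ) * Real.exp (ν * (T - s) / σ)) :=
            Finset.sum_le_sum fun i _ =>
              mul_le_mul_of_nonneg_left (min_le_right _ _) (hs i j)
        _ = (∑ i, K s t i j) * (((τ - ε) / σ) * Real.exp (ν * (T - s) / σ)) :=
            (Finset.sum_mul _ _ _).symm
        _ ≤ ν * ((τ - ε) / σ * Real.exp (ν * (T - s) / σ)) := by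
            refine mul_le_mul_of_nonneg_right ?_ (hρnn s)
            calc (∑ i, K s t i j) ≤ ∑ i, |K s t i j| :=
                Finset.sum_le_sum fun i _ => le_abs_self _
              _ ≤ ν := hsν
    have hI1 : (∫ s in Icc t T,
          ∑ i, K s t i j * min (w s i) (((τ - ε) / σ) * Real.exp (ν * (T - s) / σ)))
        ≤ ∫ s in Icc t T, ∑ i, K s t i j * w s i :=
      integral_mono_ae hint_sum_min hint_sum_w hcmp1
    have hI2 : (∫ s in Icc t T,
          ∑ i, K s t i j * min (w s i) (((τ - ε) / σ) * Real.exp (ν * (T - s) / σ)))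
        ≤ σ * ((τ - ε) / σ * Real.exp (ν * (T - t) / σ)) - (τ - ε) := by
      calc _ ≤ ∫ s in Icc t T, ν * ((τ - ε) / σ * Real.exp (ν * (T - s) / σ)) :=
            integral_mono_ae hint_sum_min hint_rho hcmp2
        _ = σ * ((τ - ε) / σ * Real.exp (ν * (T - t) / σ)) - (τ - ε) :=
            rho_integral hσ hν htT
    -- nonnegativity of the B-terms
    have hBnn : ∀ i, 0 ≤ B t i j := by
      intro i
      by_cases hB : B t i j = 0
      · exact hB.ge
      · exact le_trans hσ.le (hBt i j hB)
    by_cases hcase : ∀ i, B t i j ≠ 0 →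
        w t i ≤ ((τ - ε) / σ) * Real.exp (ν * (T - t) / σ)
    · have hsum_eq : (∑ i, B t i j * min (w t i) (((τ - ε) / σ) * Real.exp (ν * (T - t) / σ)))
          = ∑ i, B t i j * w t i := by
        refine Finset.sum_congr rfl fun i _ => ?_
        by_cases hB : B t i j = 0
        · rw [hB]; ring
        · rw [min_eq_left (hcase i hB)]
      rw [hsum_eq]
      have := hfeas j
      linarith
    · push_neg at hcase
      obtain ⟨i₀, hB0, hgt⟩ := hcase
      have hmin : min (w t i₀) (((τ - ε) / σ) * Real.exp (ν * (T - t) / σ))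
          = ((τ - ε) / σ) * Real.exp (ν * (T - t) / σ) := min_eq_right hgt.le
      have hterm : σ * (((τ - ε) / σ) * Real.exp (ν * (T - t) / σ))
          ≤ B t i₀ j * min (w t i₀) (((τ - ε) / σ) * Real.exp (ν * (T - t) / σ)) := by
        rw [hmin]
        exact mul_le_mul_of_nonneg_right (hBt i₀ j hB0) (hρnn t)
      have hsum_ge : B t i₀ j * min (w t i₀) (((τ - ε) / σ) * Real.exp (ν * (T - t) / σ))
          ≤ ∑ i, B t i j * min (w t i) (((τ - ε) / σ) * Real.exp (ν * (T - t) / σ)) :=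
        Finset.single_le_sum
          (fun i _ => mul_nonneg (hBnn i) (le_min (hwt i) (hρnn t)))
          (Finset.mem_univ i₀)
      have hab : a t j ≤ τ := le_trans (le_abs_self _) (hat j)
      linarith
end

section
/- Consider the discretized dual problem (DLP^{(N)}) with data a^{(u)} ∈ ℝ^q, B^{(u)}, K^{(v,u)} ∈ ℝ^{p×q}. Assume: (a) a_j^{(u)} ≤ τ for all j, u; (b) Σ_{i=1}^p K_{ij}^{(v,u)} ≤ ν for all j, u, v; (c) for each j, u there is an index i_j with B_{i_j j}^{(u)} ≥ σ > 0, and all B_{ij}^{(u)} ≥ 0. Define 𝔴_u = (τ/σ)(1 + δν/σ)^{N−u} where δ = max_u (t_u − t_{u−1}), and let w^{(u)} ∈ ℝ^p have all entries equal to 𝔴_u. Then Σ_i B_{ij}^{(u)} w_i^{(u)} ≥ a_j^{(u)} + Σ_{v=u+1}^{N} (t_v − t_{v−1}) Σ_i K_{ij}^{(v,u)} w_i^{(v)} for all j and u = 1,…,N−1, and Σ_i B_{ij}^{(N)} w_i^{(N)} ≥ a_j^{(N)}; i.e., (w^{(1)},…,w^{(N)}) is feasible for (DLP^{(N)}). 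-/
/-- Proposition 4.1(ii): the explicit point w^{(u)} with all entries
𝔴_u = (τ/σ)(1 + δν/σ)^{N−u} is feasible for the discretized dual (DLP^{(N)}). -/
theorem dlp_discretized_feasible (T τ ν σ : ℝ) (p q N : ℕ) (hN : 1 ≤ N)
    (hτ : 0 < τ) (hν : 0 < ν) (hσ : 0 < σ)
    (t : ℕ → ℝ) (ht0 : t 0 = 0) (htN : t N = T)
    (hmono : ∀ u < N, t u < t (u + 1))
    (a : ℕ → Fin q → ℝ) (B : ℕ → Fin p → Fin q → ℝ)
    (K : ℕ → ℕ → Fin p → Fin q → ℝ)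
    (ha : ∀ u j, a u j ≤ τ)
    (hK : ∀ u v j, ∑ i, K v u i j ≤ ν)
    (hBnn : ∀ u i j, 0 ≤ B u i j)
    (hBσ : ∀ u, 1 ≤ u → u ≤ N → ∀ j, ∃ i, σ ≤ B u i j)
    (δ : ℝ) (hδ : ∀ u, 1 ≤ u → u ≤ N → t u - t (u - 1) ≤ δ) :
    (∀ u, 1 ≤ u → u ≤ N - 1 → ∀ j,
      a u j + ∑ v ∈ Finset.Icc (u + 1) N, (t v - t (v - 1)) *
          ∑ i, K v u i j * ((τ / σ) * (1 + δ * ν / σ) ^ (N - v))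
        ≤ ∑ i, B u i j * ((τ / σ) * (1 + δ * ν / σ) ^ (N - u))) ∧
    (∀ j, a N j ≤ ∑ i, B N i j * ((τ / σ) * (1 + δ * ν / σ) ^ (N - N))) := by
  set r : ℝ := 1 + δ * ν / σ with hr
  have hδpos : 0 < δ := by
    have h1 := hmono 0 (by omega)
    have h2 := hδ 1 le_rfl hN
    simp at h2
    linarith
  have hr1 : (1 : ℝ) ≤ r := by
    have h : 0 ≤ δ * ν / σ := by positivity
    rw [hr]; linarith
  have hr0 : (0 : ℝ) < r := by linarith
  have key : ∀ u, 1 ≤ u → u ≤ N → ∀ j,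
      a u j + ∑ v ∈ Finset.Icc (u + 1) N, (t v - t (v - 1)) *
          ∑ i, K v u i j * ((τ / σ) * r ^ (N - v))
        ≤ ∑ i, B u i j * ((τ / σ) * r ^ (N - u)) := by
    intro u hu1 huN j
    -- lower bound for the RHS
    obtain ⟨i₀, hi₀⟩ := hBσ u hu1 huN j
    have hwpos : ∀ k : ℕ, 0 < (τ / σ) * r ^ k := by
      intro k; positivity
    have hRHS : τ * r ^ (N - u) ≤ ∑ i, B u i j * ((τ / σ) * r ^ (N - u)) := by
      have h1 : B u i₀ j * ((τ / σ) * r ^ (N - u)) ≤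
          ∑ i, B u i j * ((τ / σ) * r ^ (N - u)) :=
        Finset.single_le_sum (f := fun i => B u i j * ((τ / σ) * r ^ (N - u))) (fun i _ => by
          have := hBnn u i j
          have := (hwpos (N - u)).le
          positivity) (Finset.mem_univ i₀)
      have h2 : σ * ((τ / σ) * r ^ (N - u)) ≤ B u i₀ j * ((τ / σ) * r ^ (N - u)) :=
        mul_le_mul_of_nonneg_right hi₀ (hwpos (N - u)).le
      have h3 : σ * ((τ / σ) * r ^ (N - u)) = τ * r ^ (N - u) := by
        field_simp
      linarith
    -- upper bound for the sum
    have hsumterm : ∀ v ∈ Finset.Icc (u + 1) N,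
        (t v - t (v - 1)) * ∑ i, K v u i j * ((τ / σ) * r ^ (N - v))
          ≤ δ * ν * ((τ / σ) * r ^ (N - v)) := by
      intro v hv
      rw [Finset.mem_Icc] at hv
      have htd : 0 < t v - t (v - 1) := by
        have := hmono (v - 1) (by omega)
        have hv1 : v - 1 + 1 = v := by omega
        rw [hv1] at this
        linarith
      have htdδ : t v - t (v - 1) ≤ δ := hδ v (by omega) hv.2
      have hKν : ∑ i, K v u i j ≤ ν := hK u v j
      have hsum : ∑ i, K v u i j * ((τ / σ) * r ^ (N - v)) =
          (∑ i, K v u i j) * ((τ / σ) * r ^ (N - v)) := (Finset.sum_mul _ _ _).symm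
      rw [hsum]
      have hw := (hwpos (N - v)).le
      set w := (τ / σ) * r ^ (N - v)
      set d := t v - t (v - 1)
      set S := ∑ i, K v u i j
      have h1 : d * (S * w) ≤ d * (ν * w) := by
        apply mul_le_mul_of_nonneg_left _ htd.le
        exact mul_le_mul_of_nonneg_right hKν hw
      have h2 : d * (ν * w) ≤ δ * (ν * w) := by
        apply mul_le_mul_of_nonneg_right htdδ
        positivity
      calc d * (S * w) ≤ δ * (ν * w) := le_trans h1 h2
        _ = δ * ν * w := by ring
    have hsumle : ∑ v ∈ Finset.Icc (u + 1) N, (t v - t (v - 1)) *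
          ∑ i, K v u i j * ((τ / σ) * r ^ (N - v))
        ≤ ∑ v ∈ Finset.Icc (u + 1) N, δ * ν * ((τ / σ) * r ^ (N - v)) :=
      Finset.sum_le_sum hsumterm
    -- reindex the geometric sum
    have hreindex : ∑ v ∈ Finset.Icc (u + 1) N, r ^ (N - v)
        = ∑ k ∈ Finset.range (N - u), r ^ k := by
      apply Finset.sum_nbij' (fun v => N - v) (fun k => N - k)
      · intro v hv; rw [Finset.mem_Icc] at hv; simp [Finset.mem_range]; omega
      · intro k hk; rw [Finset.mem_range] at hk; rw [Finset.mem_Icc]; omega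
      · intro v hv; rw [Finset.mem_Icc] at hv; omega
      · intro k hk; rw [Finset.mem_range] at hk; omega
      · intro v hv; rfl
    have hgeom : (∑ k ∈ Finset.range (N - u), r ^ k) * (r - 1) = r ^ (N - u) - 1 :=
      geom_sum_mul r (N - u)
    have hrm1 : r - 1 = δ * ν / σ := by rw [hr]; ring
    have hsumval : ∑ v ∈ Finset.Icc (u + 1) N, δ * ν * ((τ / σ) * r ^ (N - v))
        = τ * (r ^ (N - u) - 1) := by
      have : ∑ v ∈ Finset.Icc (u + 1) N, δ * ν * ((τ / σ) * r ^ (N - v))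
          = δ * ν * (τ / σ) * ∑ v ∈ Finset.Icc (u + 1) N, r ^ (N - v) := by
        rw [Finset.mul_sum]; apply Finset.sum_congr rfl; intro v _; ring
      rw [this, hreindex]
      have hσ' : σ ≠ 0 := ne_of_gt hσ
      have : δ * ν * (τ / σ) = τ * (r - 1) := by
        rw [hrm1]; field_simp
      rw [this]
      calc τ * (r - 1) * ∑ k ∈ Finset.range (N - u), r ^ k
          = τ * ((∑ k ∈ Finset.range (N - u), r ^ k) * (r - 1)) := by ring
        _ = τ * (r ^ (N - u) - 1) := by rw [hgeom]
    have haτ := ha u j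
    calc a u j + ∑ v ∈ Finset.Icc (u + 1) N, (t v - t (v - 1)) *
          ∑ i, K v u i j * ((τ / σ) * r ^ (N - v))
        ≤ τ + τ * (r ^ (N - u) - 1) := by rw [← hsumval] at *; linarith
      _ = τ * r ^ (N - u) := by ring
      _ ≤ ∑ i, B u i j * ((τ / σ) * r ^ (N - u)) := hRHS
  constructor
  · intro u hu1 huN j
    exact key u hu1 (by omega) j
  · intro j
    have h := key N hN le_rfl j
    have hempty : Finset.Icc (N + 1) N = ∅ := by
      rw [Finset.Icc_eq_empty]; omega
    rw [hempty, Finset.sum_empty, add_zero] at h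
    exact h
end
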